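/- arXiv:1608.00335 — 9 statements merged into one kernel-verified Lean document; each statement's English description precedes it below -/
import Mathlib

section
/- For all positive integers N, the identity $\sum_{K=0}^{\lfloor N/2 \rfloor} 2^{N-2K} \binom{N}{K} \binom{N-K}{N-2K} = \binom{2N}{N}$ holds. -/
open Polynomial Finset

theorem sum_choose_two_pow (N : ℕ) (hN : 0 < N) :
    ∑ K ∈ Finset.range (N / 2 + 1),
      2 ^ (N - 2 * K) * N.choose K * (N - K).choose (N - 2 * K) = (2 * N).choose N := by
  have key : ((X + 1 : ℕ[X]) ^ (2 * N)).coeff N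
      = ∑ k ∈ range (N + 1), 2 ^ (2 * k - N) * k.choose (N - k) * N.choose k := by
    have hexp : ((X + 1 : ℕ[X]) ^ (2 * N))
        = ∑ k ∈ range (N + 1), X ^ k * (X + C 2) ^ k * (N.choose k : ℕ[X]) := by
      rw [pow_mul]
      have h2 : ((X + 1 : ℕ[X]) ^ 2) = X * (X + C 2) + 1 := by
        have : (C 2 : ℕ[X]) = 2 := by simp
        rw [this]; ring
      rw [h2, add_pow]
      refine Finset.sum_congr rfl fun k _ => ?_
      rw [one_pow, mul_pow, mul_one]
    rw [hexp, finset_sum_coeff]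
    refine Finset.sum_congr rfl fun k hk => ?_
    have hkN : k ≤ N := Nat.lt_succ_iff.mp (mem_range.mp hk)
    rw [mul_assoc, coeff_X_pow_mul', if_pos hkN, coeff_mul_natCast, coeff_X_add_C_pow]
    have h1 : k - (N - k) = 2 * k - N := by omega
    simp [h1, Nat.cast_id]
  rw [coeff_X_add_one_pow ℕ (2 * N) N, Nat.cast_id] at key
  calc ∑ K ∈ Finset.range (N / 2 + 1),
        2 ^ (N - 2 * K) * N.choose K * (N - K).choose (N - 2 * K)
      = ∑ j ∈ range (N + 1), (fun k => 2 ^ (2 * k - N) * k.choose (N - k) * N.choose k)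
          (N + 1 - 1 - j) := by
        symm
        refine (Finset.sum_subset (Finset.range_subset_range.mpr (by omega : N / 2 + 1 ≤ N + 1))
          ?_).symm.trans (Finset.sum_congr rfl fun K hK => ?_)
        · intro k hk hk2
          have hk' : k ≤ N := Nat.lt_succ_iff.mp (mem_range.mp hk)
          have hlt : N / 2 < k := by
            by_contra h
            exact hk2 (mem_range.mpr (by omega))
          have hz : (N - k).choose (N - (N - k)) = 0 :=
            Nat.choose_eq_zero_of_lt (by omega)
          simp [hz]
        · have hK2 : 2 * K ≤ N := by
            have := Nat.lt_succ_iff.mp (mem_range.mp hK)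
            omega
          simp only
          have h3 : N + 1 - 1 - K = N - K := by omega
          rw [h3]
          have h2 : 2 * (N - K) - N = N - 2 * K := by omega
          have h1 : N - (N - K) = K := by omega
          have h5 : (N - K).choose K = (N - K).choose (N - 2 * K) := by
            rw [show N - 2 * K = (N - K) - K by omega, Nat.choose_symm (by omega)]
          rw [h1, h2, h5, Nat.choose_symm (show K ≤ N by omega)]
          ring
    _ = ∑ k ∈ range (N + 1), 2 ^ (2 * k - N) * k.choose (N - k) * N.choose k := by
        exact Finset.sum_range_reflect (fun k => 2 ^ (2 * k - N) * k.choose (N - k) * N.choose k) (N + 1)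
    _ = (2 * N).choose N := key.symm
end

section
/- For every integer $n \geq 2$, $\sum_{k \geq 1} k \cdot \frac{2^{n-2k} \binom{n-1}{n-2k,\,k,\,k-1}}{\binom{2n-2}{n}} = \frac{n(n-1)}{4n-6}$, where the sum runs over all $k$ with $1 \leq 2k \leq n$. -/
/-- The multinomial coefficient `(n-1)! / ((n-2k)! k! (k-1)!)`, taken to be zero
when `n - 2k < 0`. -/
def multinom (n k : ℕ) : ℚ :=
  if 2 * k ≤ n then
    ((n - 1).factorial : ℚ) / (((n - 2 * k).factorial : ℚ) * (k.factorial : ℚ) *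
      ((k - 1).factorial : ℚ))
  else 0

section Aux
open Polynomial Finset

theorem coeff_one_add_two_X (r k : ℕ) :
    (((1:ℚ[X]) + C 2 * X)^r).coeff k = (r.choose k : ℚ) * 2^k := by
  rw [add_comm, add_pow, finset_sum_coeff]
  have : ∀ i ∈ range (r+1), ((C 2 * X)^i * 1^(r-i) * (r.choose i : ℚ[X])).coeff k
      = if i = k then (r.choose k : ℚ) * 2^k else 0 := by
    intro i _
    rw [one_pow, mul_one, mul_pow, ← C_pow, ← C_eq_natCast, mul_comm (C (2^i)), mul_assoc,
      ← C_mul, coeff_X_pow_mul', coeff_C]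
    split_ifs <;> try rfl
    all_goals try omega
    have h : i = k := by omega
    subst h; ring
  rw [Finset.sum_congr rfl this, Finset.sum_ite_eq' (range (r+1)) k]
  split_ifs with h
  · rfl
  · simp at h; rw [Nat.choose_eq_zero_of_lt (by omega), Nat.cast_zero, zero_mul]

theorem trinom (m : ℕ) :
    ∑ j ∈ Finset.range (m+1), (m.choose j : ℚ) * (m-j).choose j * 2^(m-2*j)
      = ((2*m).choose m : ℚ) := by
  have hC : (C 2 : ℚ[X]) = 2 := by
    have := C_eq_natCast (R := ℚ) 2; push_cast at this ⊢; exact_mod_cast this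
  have h1 : ((1+X:ℚ[X])^(2*m)).coeff m = ((2*m).choose m : ℚ) := coeff_one_add_X_pow ℚ (2*m) m
  have h2 : ((1:ℚ[X])+X)^(2*m) = (X^2 + (1 + C 2 * X))^m := by
    rw [pow_mul, hC]; ring
  rw [h2, add_pow, finset_sum_coeff] at h1
  rw [← h1]
  refine Finset.sum_congr rfl fun j hj => ?_
  rw [mul_rotate (((X:ℚ[X])^2)^j) _ _, ← pow_mul, coeff_mul_X_pow',
    ← C_eq_natCast, coeff_mul_C, coeff_one_add_two_X]
  simp only [mem_range] at hj
  split_ifs with h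
  · have hc : (m-j).choose (m-2*j) = (m-j).choose j := by
      rw [show m-2*j = (m-j)-j by omega]; exact Nat.choose_symm (by omega)
    rw [hc]; ring
  · rw [Nat.choose_eq_zero_of_lt (by omega : m - j < j)]
    push_cast; ring

theorem cb_step (m : ℕ) : (4*m+2) * (2*m).choose m = (m+2) * ((2*m+2).choose (m+2)) := by
  have h1 := Nat.choose_succ_right_eq (2*m+2) (m+1)
  have h2 := Nat.succ_mul_centralBinom_succ m
  simp only [Nat.centralBinom] at h2
  have e1 : 2*m+2 - (m+1) = m+1 := by omega
  have e2 : 2*(m+1) = 2*m+2 := by omega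
  rw [e1] at h1
  rw [e2] at h2
  calc (4*m+2) * (2*m).choose m = 2*(2*m+1) * (2*m).choose m := by ring
    _ = (m+1) * (2*m+2).choose (m+1) := h2.symm
    _ = (2*m+2).choose (m+1) * (m+1) := by ring
    _ = (2*m+2).choose (m+1+1) * (m+1+1) := h1.symm
    _ = (m+2) * ((2*m+2).choose (m+2)) := by ring

end Aux

open Finset in
theorem expected_components_complete_graph (n : ℕ) (hn : 2 ≤ n) :
    ∑ k ∈ Finset.Icc 1 (n / 2),
      (k : ℚ) * ((2 : ℚ) ^ (n - 2 * k) * multinom n k) / (((2 * n - 2).choose n : ℚ)) =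
    ((n : ℚ) * ((n : ℚ) - 1)) / (4 * (n : ℚ) - 6) := by
  obtain ⟨m, rfl⟩ : ∃ m, n = m + 2 := ⟨n - 2, by omega⟩
  set n := m + 2 with hn2
  rw [← Finset.sum_div]
  have hnum : ∑ k ∈ Finset.Icc 1 (n/2), (k:ℚ) * ((2:ℚ)^(n-2*k) * multinom n k)
      = ((m:ℚ)+1) * ((2*m).choose m : ℚ) := by
    rw [← Finset.Ico_add_one_right_eq_Icc, Finset.sum_Ico_eq_sum_range]
    have hr : n/2 + 1 - 1 = m/2 + 1 := by omega
    rw [hr]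
    have step : ∀ j ∈ Finset.range (m/2+1),
        ((1+j : ℕ):ℚ) * ((2:ℚ)^(n-2*(1+j)) * multinom n (1+j))
        = ((m:ℚ)+1) * ((m.choose j : ℚ) * (m-j).choose j * 2^(m-2*j)) := by
      intro j hj
      simp only [Finset.mem_range] at hj
      have h2j : 2*(1+j) ≤ n := by omega
      rw [multinom, if_pos h2j]
      have e1 : n - 2*(1+j) = m - 2*j := by omega
      have e2 : n - 1 = m + 1 := by omega
      have e3 : (1+j) - 1 = j := by omega
      rw [e1, e2, e3]
      have hfac : m.choose j * ((m-j).choose j) * ((m-2*j).factorial * j.factorial * j.factorial)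
          = m.factorial := by
        have a1 := Nat.choose_mul_factorial_mul_factorial (show j ≤ m by omega)
        have a2 := Nat.choose_mul_factorial_mul_factorial (show j ≤ m - j by omega)
        have e4 : m - j - j = m - 2*j := by omega
        rw [e4] at a2
        rw [← a2] at a1
        ring_nf at a1 ⊢
        linarith [a1]
      have hfQ : (m.factorial : ℚ)
          = (m.choose j : ℚ) * ((m-j).choose j) * ((m-2*j).factorial * j.factorial * j.factorial) := by
        exact_mod_cast hfac.symm
      have hne1 : ((m-2*j).factorial : ℚ) ≠ 0 := by positivity
      have hne2 : ((1+j).factorial : ℚ) ≠ 0 := by positivity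
      have hne3 : (j.factorial : ℚ) ≠ 0 := by positivity
      have hfs : ((m+1).factorial : ℚ) = ((m:ℚ)+1) * m.factorial := by
        rw [Nat.factorial_succ]; push_cast; ring
      have hfs2 : ((1+j).factorial : ℚ) = ((j:ℚ)+1) * j.factorial := by
        rw [show 1+j = j+1 by omega, Nat.factorial_succ]; push_cast; ring
      rw [hfs, hfs2] at *
      field_simp
      rw [hfQ]
      push_cast
      ring
    rw [Finset.sum_congr rfl step, ← Finset.mul_sum]
    congr 1
    rw [← trinom m]
    refine Finset.sum_subset (Finset.range_subset_range.2 (show m/2+1 ≤ m+1 by omega)) ?_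
    intro j hj hj2
    simp only [Finset.mem_range] at hj hj2
    rw [Nat.choose_eq_zero_of_lt (show m - j < j by omega)]
    push_cast; ring
  rw [hnum]
  have e5 : 2*n - 2 = 2*m+2 := by omega
  have e6 : (2*m+2).choose n = (2*m+2).choose (m+2) := by rw [hn2]
  rw [e5, e6]
  have hD : ((2*m+2).choose (m+2) : ℚ) ≠ 0 := by
    have := Nat.choose_pos (show m+2 ≤ 2*m+2 by omega)
    positivity
  have h4 : (4*(n:ℚ) - 6) ≠ 0 := by
    have : (n:ℚ) = (m:ℚ)+2 := by push_cast [hn2]; ring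
    rw [this]; intro h; nlinarith [Nat.cast_nonneg (α := ℚ) m]
  rw [div_eq_div_iff hD h4]
  have hcb : ((4*m+2 : ℕ):ℚ) * ((2*m).choose m : ℚ) = ((m+2:ℕ):ℚ) * ((2*m+2).choose (m+2) : ℚ) := by
    exact_mod_cast congrArg (Nat.cast (R := ℚ)) (cb_step m)
  have hnQ : (n:ℚ) = (m:ℚ)+2 := by push_cast [hn2]; ring
  rw [hnQ]
  push_cast at hcb ⊢
  linear_combination ((m:ℚ)+1) * hcb
end

section
/- For all positive integers $s, t$, $\sum_{k=1}^{\min(s,t)} \frac{k(s+t)\binom{s}{k}\binom{t}{k}}{st\binom{s+t}{s}} = 1$. That is, the quantities $P(K_{s,t},k) = \frac{k(s+t)\binom{s}{k}\binom{t}{k}}{st\binom{s+t}{s}}$ form a probability distribution on $k$. -/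
open Finset

lemma key_nat_sum (s t : ℕ) (hs : 1 ≤ s) (ht : 1 ≤ t) :
    ∑ k ∈ Finset.Icc 1 (min s t), k * s.choose k * t.choose k
      = s * (s + t - 1).choose (t - 1) := by
  have h1 : ∑ k ∈ Finset.Icc 1 (min s t), k * s.choose k * t.choose k
      = ∑ k ∈ Finset.Icc 1 t, k * s.choose k * t.choose k := by
    apply Finset.sum_subset
    · intro x hx
      simp only [Finset.mem_Icc] at hx ⊢
      exact ⟨hx.1, hx.2.trans (min_le_right _ _)⟩
    · intro x hx hnx
      simp only [Finset.mem_Icc, not_and, not_le] at hx hnx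
      have : s < x := by
        have := hnx hx.1
        rcases le_total s t with h | h
        · simpa [min_eq_left h] using this
        · omega
      simp [Nat.choose_eq_zero_of_lt this]
  rw [h1]
  have h2 : ∑ k ∈ Finset.Icc 1 t, k * s.choose k * t.choose k
      = ∑ i ∈ Finset.range t, (i + 1) * s.choose (i + 1) * t.choose (i + 1) := by
    rw [show Finset.Icc 1 t = Finset.map ⟨Nat.succ, Nat.succ_injective⟩ (Finset.range t) by
      ext k
      simp only [Finset.mem_Icc, Finset.mem_map, Finset.mem_range,
        Function.Embedding.coeFn_mk, Nat.succ_eq_add_one]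
      constructor
      · rintro ⟨h1, h2⟩; exact ⟨k - 1, by omega, by omega⟩
      · rintro ⟨a, ha, rfl⟩; omega]
    rw [Finset.sum_map]
    rfl
  rw [h2]
  have h3 : ∀ i ∈ Finset.range t, (i + 1) * s.choose (i + 1) * t.choose (i + 1)
      = s * ((s - 1).choose i * t.choose (t - 1 - i)) := by
    intro i hi
    simp only [Finset.mem_range] at hi
    have hsucc : s * (s - 1).choose i = s.choose (i + 1) * (i + 1) := by
      have h := Nat.add_one_mul_choose_eq (s - 1) i
      rwa [show s - 1 + 1 = s by omega] at h
    have hsym : t.choose (i + 1) = t.choose (t - 1 - i) := by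
      rw [← Nat.choose_symm (by omega : i + 1 ≤ t)]
      congr 1
      omega
    rw [hsym, ← Nat.mul_assoc, hsucc]
    ring
  rw [Finset.sum_congr rfl h3, ← Finset.mul_sum]
  congr 1
  have hv := Nat.add_choose_eq (s - 1) t (t - 1)
  rw [Finset.Nat.sum_antidiagonal_eq_sum_range_succ_mk] at hv
  rw [show s - 1 + t = s + t - 1 by omega] at hv
  rw [show (t - 1).succ = t by omega] at hv
  exact hv.symm

theorem bipartite_probabilities_sum_to_one (s t : ℕ) (hs : 1 ≤ s) (ht : 1 ≤ t) :
    ∑ k ∈ Finset.Icc 1 (min s t),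
      ((k : ℚ) * ((s : ℚ) + (t : ℚ)) * (s.choose k : ℚ) * (t.choose k : ℚ)) /
        ((s : ℚ) * (t : ℚ) * ((s + t).choose s : ℚ)) = 1 := by
  have hC : 0 < (s + t).choose s := Nat.choose_pos (by omega)
  have hden : ((s : ℚ) * (t : ℚ) * ((s + t).choose s : ℚ)) ≠ 0 := by
    have : (0:ℚ) < (s : ℚ) * (t : ℚ) * ((s + t).choose s : ℚ) := by
      apply mul_pos
      apply mul_pos
      · exact_mod_cast hs
      · exact_mod_cast ht
      · exact_mod_cast hC
    exact this.ne'
  rw [← Finset.sum_div, div_eq_one_iff_eq hden]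
  have hkey := key_nat_sum s t hs ht
  have : ∑ k ∈ Finset.Icc 1 (min s t),
      ((k : ℚ) * ((s : ℚ) + (t : ℚ)) * (s.choose k : ℚ) * (t.choose k : ℚ))
      = ((s : ℚ) + (t : ℚ)) * (s * (s + t - 1).choose (t - 1) : ℕ) := by
    rw [← hkey]
    push_cast
    rw [Finset.mul_sum]
    apply Finset.sum_congr rfl
    intro k hk
    ring
  rw [this]
  have habs : (s + t) * (s + t - 1).choose (t - 1) = (s + t).choose t * t := by
    have h := Nat.add_one_mul_choose_eq (s + t - 1) (t - 1)
    rwa [show s + t - 1 + 1 = s + t by omega, show t - 1 + 1 = t by omega] at h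
  have hsym : (s + t).choose t = (s + t).choose s := Nat.choose_symm_add.symm
  push_cast
  have : ((s:ℚ) + t) * ((s:ℚ) * ((s + t - 1).choose (t - 1) : ℚ))
      = (s:ℚ) * (((s + t) * (s + t - 1).choose (t - 1) : ℕ) : ℚ) := by
    push_cast; ring
  rw [this, habs, hsym]
  push_cast
  ring
end

section
/- For all positive integers $s, t$, $\sum_{k=1}^{\min(s,t)} k \cdot \frac{k(s+t)\binom{s}{k}\binom{t}{k}}{st\binom{s+t}{s}} = \frac{st}{s+t-1}$. -/
open Finset

lemma vand (a b : ℕ) :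
    ∑ j ∈ Finset.range (min a b + 1), a.choose j * b.choose j = (a + b).choose b := by
  rw [Nat.add_choose_eq, Finset.Nat.sum_antidiagonal_eq_sum_range_succ_mk]
  rw [← Finset.sum_subset (Finset.range_subset_range.2 (by omega : min a b + 1 ≤ b + 1))]
  · refine Finset.sum_congr rfl fun j hj => ?_
    simp only [Finset.mem_range] at hj
    have : b - (b - j) = j := by omega
    rw [show ((j, b - j).2 : ℕ) = b - j from rfl, ← this, Nat.choose_symm (by omega)]
    simp [this]
  · intro j hj hj2
    simp only [Finset.mem_range] at hj hj2
    rw [Nat.choose_eq_zero_of_lt (by omega : a < j), zero_mul]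

lemma key (a b : ℕ) :
    ∑ j ∈ Finset.range (min (a + 1) (b + 1)),
      (j + 1) * (j + 1) * ((a + 1).choose (j + 1)) * ((b + 1).choose (j + 1)) =
    (a + 1) * (b + 1) * ((a + b).choose b) := by
  have h : ∀ j : ℕ, (j + 1) * (j + 1) * ((a + 1).choose (j + 1)) * ((b + 1).choose (j + 1)) =
      (a + 1) * (b + 1) * (a.choose j * b.choose j) := by
    intro j
    have h1 := Nat.add_one_mul_choose_eq a j
    have h2 := Nat.add_one_mul_choose_eq b j
    rw [show (j + 1) * (j + 1) * ((a + 1).choose (j + 1)) * ((b + 1).choose (j + 1)) =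
      ((a + 1).choose (j + 1) * (j + 1)) * ((b + 1).choose (j + 1) * (j + 1)) by ring,
      ← h1, ← h2]
    ring
  rw [show min (a + 1) (b + 1) = min a b + 1 by omega,
    Finset.sum_congr rfl (fun j _ => h j), ← Finset.mul_sum, vand]

lemma chooseid (a b : ℕ) :
    (a + 1) * (b + 1) * ((a + 1 + (b + 1)).choose (a + 1)) =
    (a + 1 + (b + 1)) * (a + b + 1) * ((a + b).choose b) := by
  have h1 := Nat.add_one_mul_choose_eq (a + b) b
  have h2 := Nat.add_one_mul_choose_eq (a + b + 1) a
  have h3 : (a + b + 1).choose a = (a + b + 1).choose (b + 1) := by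
    rw [show b + 1 = a + b + 1 - a by omega, Nat.choose_symm (by omega)]
  have h4 : (a + b + 1 + 1).choose (a + 1) = (a + 1 + (b + 1)).choose (a + 1) := by
    congr 1; omega
  rw [h3] at h2
  rw [← h4]
  nlinarith [h1, h2]

theorem expected_components_complete_bipartite (s t : ℕ) (hs : 1 ≤ s) (ht : 1 ≤ t) :
    ∑ k ∈ Finset.Icc 1 (min s t),
      (k : ℚ) * (((k : ℚ) * ((s : ℚ) + (t : ℚ)) * (s.choose k : ℚ) * (t.choose k : ℚ)) /
        ((s : ℚ) * (t : ℚ) * ((s + t).choose s : ℚ))) =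
    (s : ℚ) * (t : ℚ) / ((s : ℚ) + (t : ℚ) - 1) := by
  obtain ⟨a, rfl⟩ : ∃ a, s = a + 1 := ⟨s - 1, by omega⟩
  obtain ⟨b, rfl⟩ : ∃ b, t = b + 1 := ⟨t - 1, by omega⟩
  have hDpos : (0 : ℚ) < ((a + 1 + (b + 1)).choose (a + 1) : ℚ) := by
    exact_mod_cast Nat.choose_pos (by omega)
  have hsum : ∑ k ∈ Finset.Icc 1 (min (a+1) (b+1)),
      (k : ℚ) * (((k : ℚ) * (((a+1 : ℕ) : ℚ) + ((b+1 : ℕ) : ℚ)) * ((a+1).choose k : ℚ) * ((b+1).choose k : ℚ)) /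
        (((a+1 : ℕ) : ℚ) * (((b+1 : ℕ)) : ℚ) * ((a + 1 + (b + 1)).choose (a + 1) : ℚ))) =
      ((((a:ℚ)+1) + ((b:ℚ)+1)) / (((a:ℚ)+1) * ((b:ℚ)+1) * ((a + 1 + (b + 1)).choose (a + 1) : ℚ))) *
        ((∑ j ∈ Finset.range (min (a + 1) (b + 1)),
          (j + 1) * (j + 1) * ((a + 1).choose (j + 1)) * ((b + 1).choose (j + 1)) : ℕ) : ℚ) := by
    rw [← Finset.Ico_add_one_right_eq_Icc, Finset.sum_Ico_eq_sum_range]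
    push_cast
    rw [Finset.mul_sum]
    refine Finset.sum_congr rfl fun j hj => ?_
    push_cast
    ring
  push_cast at hsum ⊢
  rw [hsum]
  have hkey : ((∑ j ∈ Finset.range (min (a + 1) (b + 1)),
      (j + 1) * (j + 1) * ((a + 1).choose (j + 1)) * ((b + 1).choose (j + 1)) : ℕ) : ℚ) =
      (((a + 1) * (b + 1) * ((a + b).choose b) : ℕ) : ℚ) := by rw [key]
  push_cast at hkey
  rw [hkey]
  have hC : (((a + 1 + (b + 1)).choose (a + 1) : ℕ) : ℚ) * (((a:ℚ)+1) * ((b:ℚ)+1)) =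
      (((a:ℚ)+1) + ((b:ℚ)+1)) * ((a:ℚ)+(b:ℚ)+1) * (((a + b).choose b : ℕ) : ℚ) := by
    have := chooseid a b
    have h := congrArg (fun n : ℕ => (n : ℚ)) this
    push_cast at h
    linarith [h]
  have h1 : ((a:ℚ)+1) ≠ 0 := by positivity
  have h2 : ((b:ℚ)+1) ≠ 0 := by positivity
  have h3 : (((a + 1 + (b + 1)).choose (a + 1) : ℕ) : ℚ) ≠ 0 := ne_of_gt hDpos
  have h4 : ((a:ℚ)+1) + ((b:ℚ)+1) - 1 ≠ 0 := by
    have : (0:ℚ) < (a:ℚ) + (b:ℚ) + 1 := by positivity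
    intro hcon; apply ne_of_gt this; linarith
  set C : ℚ := (((a + 1 + (b + 1)).choose (a + 1) : ℕ) : ℚ) with hCdef
  set X : ℚ := (((a + b).choose b : ℕ) : ℚ) with hXdef
  field_simp
  linear_combination (-1 : ℚ) * hC
end

section
/- For integers $s, t \geq 1$ and $0 \leq a \leq s$, $0 \leq b \leq t$, and any integer $\ell$, the two expressions $\frac{\binom{b}{\ell}\binom{s+t-b-1}{a-\ell}}{\binom{s+t-1}{a}}$ and $\frac{\binom{a}{\ell}\binom{s+t-a-1}{b-\ell}}{\binom{s+t-1}{b}}$ are equal. -/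
/-- Binomial coefficient of integer arguments, with the convention that it
vanishes when the lower index is negative or exceeds the upper index. -/
def intChoose (n k : ℤ) : ℚ :=
  if 0 ≤ k ∧ k ≤ n then (n.toNat.choose k.toNat : ℚ) else 0

lemma intChoose_natCast (m k : ℕ) : intChoose (m : ℤ) (k : ℤ) = (m.choose k : ℚ) := by
  unfold intChoose
  split_ifs with h
  · simp
  · push_neg at h
    have hk : (m : ℤ) < k := h (Int.ofNat_nonneg k)
    rw [Nat.choose_eq_zero_of_lt (by exact_mod_cast hk)]
    simp

lemma intChoose_neg {n k : ℤ} (h : k < 0) : intChoose n k = 0 := by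
  unfold intChoose; rw [if_neg]; rintro ⟨h0, -⟩; omega

lemma intChoose_gt {n k : ℤ} (h : n < k) : intChoose n k = 0 := by
  unfold intChoose; rw [if_neg]; rintro ⟨-, h0⟩; omega

/-- symmetric two-step choice identity -/
lemma choose_swap (m i j : ℕ) (h : i + j ≤ m) :
    m.choose i * (m - i).choose j = m.choose j * (m - j).choose i := by
  have h1 := Nat.choose_mul (n := m) (k := i + j) (s := i) (Nat.le_add_right i j)
  have h2 := Nat.choose_mul (n := m) (k := i + j) (s := j) (Nat.le_add_left j i)
  rw [Nat.add_sub_cancel_left] at h1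
  rw [Nat.add_sub_cancel] at h2
  rw [← h1, ← h2, Nat.choose_symm_add]

lemma key_s5 (n a b l : ℕ) (hla : l ≤ a) (hlb : l ≤ b) (han : a ≤ n) (hbn : b ≤ n)
    (hab : a + b ≤ n + l) :
    b.choose l * (n - b).choose (a - l) * n.choose b
      = a.choose l * (n - a).choose (b - l) * n.choose a := by
  have h1 := Nat.choose_mul (n := n) (k := b) (s := l) hlb
  have h2 := choose_swap (n - l) (a - l) (b - l) (by omega)
  have h3 := Nat.choose_mul (n := n) (k := a) (s := l) hla
  have e1 : n - l - (b - l) = n - b := by omega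
  have e2 : n - l - (a - l) = n - a := by omega
  rw [e1, e2] at h2
  calc b.choose l * (n - b).choose (a - l) * n.choose b
      = (n.choose b * b.choose l) * (n - b).choose (a - l) := by ring
    _ = (n.choose l * (n - l).choose (b - l)) * (n - b).choose (a - l) := by rw [h1]
    _ = n.choose l * ((n - l).choose (b - l) * (n - b).choose (a - l)) := by ring
    _ = n.choose l * ((n - l).choose (a - l) * (n - a).choose (b - l)) := by rw [← h2]
    _ = (n.choose l * (n - l).choose (a - l)) * (n - a).choose (b - l) := by ring
    _ = (n.choose a * a.choose l) * (n - a).choose (b - l) := by rw [h3]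
    _ = a.choose l * (n - a).choose (b - l) * n.choose a := by ring

theorem Q_two_forms_equal (s t a b : ℕ) (ℓ : ℤ) (hs : 1 ≤ s) (ht : 1 ≤ t)
    (ha : a ≤ s) (hb : b ≤ t) :
    intChoose (b : ℤ) ℓ * intChoose ((s : ℤ) + t - b - 1) ((a : ℤ) - ℓ) /
        intChoose ((s : ℤ) + t - 1) (a : ℤ) =
      intChoose (a : ℤ) ℓ * intChoose ((s : ℤ) + t - a - 1) ((b : ℤ) - ℓ) /
        intChoose ((s : ℤ) + t - 1) (b : ℤ) := by
  set n : ℕ := s + t - 1 with hn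
  have han : a ≤ n := by omega
  have hbn : b ≤ n := by omega
  have hcast : (s : ℤ) + t - 1 = (n : ℤ) := by omega
  have hcastb : (s : ℤ) + t - b - 1 = ((n - b : ℕ) : ℤ) := by omega
  have hcasta : (s : ℤ) + t - a - 1 = ((n - a : ℕ) : ℤ) := by omega
  rw [hcast, hcastb, hcasta]
  rcases lt_or_ge ℓ 0 with hl | hl
  · rw [intChoose_neg hl, intChoose_neg hl]; simp
  lift ℓ to ℕ using hl with l
  rcases lt_or_ge (a : ℤ) l with h | h
  · rw [intChoose_gt h, intChoose_neg (by omega : (a : ℤ) - l < 0)]; simp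
  rcases lt_or_ge (b : ℤ) l with h' | h'
  · rw [intChoose_gt h', intChoose_neg (by omega : (b : ℤ) - l < 0)]; simp
  have hla : l ≤ a := by exact_mod_cast h
  have hlb : l ≤ b := by exact_mod_cast h'
  rcases lt_or_ge (n + l) (a + b) with hab | hab
  · rw [intChoose_gt (by omega : ((n - b : ℕ) : ℤ) < (a : ℤ) - l),
      intChoose_gt (by omega : ((n - a : ℕ) : ℤ) < (b : ℤ) - l)]
    simp
  have hal : (a : ℤ) - l = ((a - l : ℕ) : ℤ) := by omega
  have hbl : (b : ℤ) - l = ((b - l : ℕ) : ℤ) := by omega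
  rw [hal, hbl, intChoose_natCast, intChoose_natCast, intChoose_natCast, intChoose_natCast,
    intChoose_natCast, intChoose_natCast]
  have hdena : (0 : ℚ) < n.choose a := by exact_mod_cast Nat.choose_pos han
  have hdenb : (0 : ℚ) < n.choose b := by exact_mod_cast Nat.choose_pos hbn
  rw [div_eq_div_iff (ne_of_gt hdena) (ne_of_gt hdenb)]
  have := key_s5 n a b l hla hlb han hbn (by omega)
  exact_mod_cast this
end

section
/- In the forest building process on a finite simple graph $G$ without isolated vertices (order the edges uniformly at random; keep an edge iff it is incident to a vertex not covered by any earlier edge), the expected number of connected components of the resulting spanning forest equals $\sum_{uv \in E(G)} \frac{1}{d(u)+d(v)-1}$. -/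
open Finset

noncomputable section
open scoped Classical

namespace ForestBuilding

variable {V : Type*} [Fintype V]

/-- A uniformly random ordering of the edges of `G` is a bijection from the
edges of `G` to initial segment positions. -/
abbrev EdgeOrdering (G : SimpleGraph V) : Type _ :=
  ↥G.edgeFinset ≃ Fin G.edgeFinset.card

/-- Two edges (as unordered pairs) share a vertex. -/
def SharesVertex {V : Type*} (e f : Sym2 V) : Prop := ∃ v, v ∈ e ∧ v ∈ f

/-- The number of connected components of the spanning forest produced by the
forest building process run with the edge ordering `π`:  an edge starts a new
component iff it precedes every other edge sharing one of its vertices, and the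
number of components (ignoring isolated vertices) is the number of such edges. -/
def numComponents (G : SimpleGraph V) (π : EdgeOrdering G) : ℕ :=
  (univ.filter fun e : ↥G.edgeFinset =>
    ∀ f : ↥G.edgeFinset, f ≠ e → SharesVertex (e : Sym2 V) (f : Sym2 V) → π e < π f).card

/-- `P G k` is the probability that the forest building process on `G`, run with
a uniformly random edge ordering, produces a spanning forest with `k` components. -/
def P (G : SimpleGraph V) (k : ℕ) : ℚ :=
  ((univ.filter fun π : EdgeOrdering G => numComponents G π = k).card : ℚ) /
    (Fintype.card (EdgeOrdering G))

/-- The expected number of components of the forest building process on `G`. -/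
def expComponents (G : SimpleGraph V) : ℚ :=
  (∑ π : EdgeOrdering G, (numComponents G π : ℚ)) / (Fintype.card (EdgeOrdering G))

/-- The component generating function `p_G(x) = ∑ₖ P(G,k) xᵏ`, evaluated at `x`.
Isolated vertices contribute nothing, matching the convention `p_{K₁}(x) = 1`. -/
def pPoly (G : SimpleGraph V) (x : ℚ) : ℚ :=
  (∑ π : EdgeOrdering G, x ^ numComponents G π) / (Fintype.card (EdgeOrdering G))

/-- The sum of the degrees of the two endpoints of an edge. -/
def degSum (G : SimpleGraph V) (e : Sym2 V) : ℕ :=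
  Sym2.lift ⟨fun u v => G.degree u + G.degree v, fun _ _ => Nat.add_comm _ _⟩ e

/-! ### Auxiliary lemmas -/


lemma cnt_swap {α β : Type*} [Fintype α] [Fintype β] [DecidableEq α] [LinearOrder β]
    (S : Finset α) (e e' : α) (he : e ∈ S) (he' : e' ∈ S) :
    (univ.filter fun π : α ≃ β => ∀ f ∈ S, f ≠ e → π e < π f).card
      = (univ.filter fun π : α ≃ β => ∀ f ∈ S, f ≠ e' → π e' < π f).card := by
  rcases eq_or_ne e e' with rfl | hne
  · rfl
  apply Finset.card_bij' (fun π _ => (Equiv.swap e e').trans π)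
    (fun π _ => (Equiv.swap e e').trans π)
  · intro π hπ
    simp only [mem_filter, mem_univ, true_and] at hπ ⊢
    intro f hf hfe'
    rcases eq_or_ne f e with rfl | hfe
    · simpa using hπ e' he' (Ne.symm hne)
    · simp only [Equiv.trans_apply, Equiv.swap_apply_right,
        Equiv.swap_apply_of_ne_of_ne hfe hfe']
      exact hπ f hf hfe
  · intro π hπ
    simp only [mem_filter, mem_univ, true_and] at hπ ⊢
    intro f hf hfe
    rcases eq_or_ne f e' with rfl | hfe'
    · simpa [Equiv.swap_apply_left] using hπ e he hne
    · simp only [Equiv.trans_apply, Equiv.swap_apply_left,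
        Equiv.swap_apply_of_ne_of_ne hfe hfe']
      exact hπ f hf hfe'
  · intro π _; ext x; simp
  · intro π _; ext x; simp

lemma count_min {α β : Type*} [Fintype α] [Fintype β] [DecidableEq α] [LinearOrder β]
    (S : Finset α) (e : α) (he : e ∈ S) :
    Nat.card {π : α ≃ β // ∀ f ∈ S, f ≠ e → π e < π f} * S.card
      = Nat.card (α ≃ β) := by
  classical
  rw [Nat.card_eq_fintype_card, Nat.card_eq_fintype_card, Fintype.card_subtype]
  have hne : S.Nonempty := ⟨e, he⟩
  set argmin : (α ≃ β) → α := fun π => π.symm ((S.image π).min' (hne.image π)) with hargmin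
  have hmem : ∀ π : α ≃ β, argmin π ∈ S := by
    intro π
    have : (S.image π).min' (hne.image π) ∈ S.image π := Finset.min'_mem _ _
    obtain ⟨a, ha, hae⟩ := Finset.mem_image.mp this
    rw [hargmin]; simp only []
    rw [← hae]; simpa using ha
  have hiff : ∀ (π : α ≃ β) (e' : α), e' ∈ S →
      (argmin π = e' ↔ ∀ f ∈ S, f ≠ e' → π e' < π f) := by
    intro π e' he'
    constructor
    · rintro rfl f hf hfe
      have h1 : π (argmin π) ≤ π f := by
        rw [hargmin]; simp only [Equiv.apply_symm_apply]
        exact Finset.min'_le _ _ (Finset.mem_image_of_mem π hf)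
      exact lt_of_le_of_ne h1 (fun hc => hfe ((π.injective hc).symm))
    · intro hall
      by_contra hc
      have h1 : π (argmin π) ≤ π e' := by
        rw [hargmin]; simp only [Equiv.apply_symm_apply]
        exact Finset.min'_le _ _ (Finset.mem_image_of_mem π he')
      exact absurd (hall _ (hmem π) hc) (not_lt.mpr h1)
  have key : Fintype.card (α ≃ β) =
      ∑ e' ∈ S, (univ.filter fun π : α ≃ β => ∀ f ∈ S, f ≠ e' → π e' < π f).card := by
    rw [← Finset.card_univ]
    rw [Finset.card_eq_sum_card_fiberwise (f := argmin) (fun π _ => hmem π)]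
    refine Finset.sum_congr rfl fun e' he' => ?_
    congr 1
    ext π
    simp only [mem_filter, mem_univ, true_and]
    exact hiff π e' he'
  rw [key]
  rw [Finset.sum_congr rfl (fun e' he' => (cnt_swap S e' e he' he))]
  rw [Finset.sum_const, smul_eq_mul, mul_comm]

lemma card_subtype_filter {α : Type*} (s : Finset α) (p : α → Prop) [DecidablePred p] :
    (univ.filter fun x : ↥s => p ↑x).card = (s.filter p).card := by
  classical
  rw [Finset.univ_eq_attach, Finset.filter_attach, Finset.card_map, Finset.card_attach]

lemma card_shares (G : SimpleGraph V) (u v : V) (huv : G.Adj u v) :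
    (G.edgeFinset.filter fun f => SharesVertex s(u, v) f).card
      = G.degree u + G.degree v - 1 := by
  classical
  have hfil : (G.edgeFinset.filter fun f => SharesVertex s(u, v) f)
      = G.incidenceFinset u ∪ G.incidenceFinset v := by
    ext f
    simp only [mem_filter, mem_union, SimpleGraph.incidenceFinset_eq_filter, SharesVertex,
      Sym2.mem_iff]
    constructor
    · rintro ⟨hf, w, (rfl | rfl), hw⟩
      · exact Or.inl ⟨hf, hw⟩
      · exact Or.inr ⟨hf, hw⟩
    · rintro (⟨hf, hw⟩ | ⟨hf, hw⟩)
      · exact ⟨hf, u, Or.inl rfl, hw⟩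
      · exact ⟨hf, v, Or.inr rfl, hw⟩
  have hinter : G.incidenceFinset u ∩ G.incidenceFinset v = {s(u, v)} := by
    ext f
    simp only [mem_inter, SimpleGraph.incidenceFinset_eq_filter, mem_filter, mem_singleton]
    constructor
    · rintro ⟨⟨hf, hu⟩, ⟨_, hv⟩⟩
      exact (Sym2.mem_and_mem_iff huv.ne).mp ⟨hu, hv⟩
    · rintro rfl
      simp [SimpleGraph.mem_edgeFinset, huv]
  rw [hfil, Finset.card_union, hinter, Finset.card_singleton,
    SimpleGraph.card_incidenceFinset_eq_degree, SimpleGraph.card_incidenceFinset_eq_degree]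

lemma degSum_mk (G : SimpleGraph V) (u v : V) :
    degSum G s(u, v) = G.degree u + G.degree v := rfl

lemma shares_card_aux (G : SimpleGraph V) (e : ↥G.edgeFinset) :
    (G.edgeFinset.filter fun f => SharesVertex (e : Sym2 V) f).card
      = degSum G (e : Sym2 V) - 1 := by
  obtain ⟨z, hz⟩ := e
  induction z using Sym2.ind with
  | _ u v =>
    have huv : G.Adj u v := by
      rwa [SimpleGraph.mem_edgeFinset, SimpleGraph.mem_edgeSet] at hz
    show (G.edgeFinset.filter fun f => SharesVertex s(u, v) f).card = degSum G s(u, v) - 1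
    rw [card_shares G u v huv, degSum_mk]

lemma degSum_ge (G : SimpleGraph V) (h : ∀ v : V, 0 < G.degree v) (e : ↥G.edgeFinset) :
    2 ≤ degSum G (e : Sym2 V) := by
  obtain ⟨z, hz⟩ := e
  induction z using Sym2.ind with
  | _ u v =>
    show 2 ≤ degSum G s(u, v)
    rw [degSum_mk]
    have := h u
    have := h v
    omega

set_option maxHeartbeats 2000000 in
/-- **Expected number of components** (Theorem 3 of the paper):  for a graph `G`
without isolated vertices, the expected number of connected components produced
by the forest building process is `∑_{uv ∈ E(G)} 1/(d(u)+d(v)-1)`. -/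
theorem expected_components (G : SimpleGraph V) (h : ∀ v : V, 0 < G.degree v) :
    expComponents G = ∑ e ∈ G.edgeFinset, 1 / ((degSum G e : ℚ) - 1) := by
  classical
  set N : ℕ := Fintype.card (EdgeOrdering G) with hNdef
  have hNpos : 0 < N := by
    rw [hNdef, Fintype.card_equiv (Fintype.equivFinOfCardEq (Fintype.card_coe _))]
    exact Nat.factorial_pos _
  -- per-edge count
  set cnt : ↥G.edgeFinset → ℕ := fun e =>
    (univ.filter fun π : EdgeOrdering G =>
      ∀ f : ↥G.edgeFinset, f ≠ e → SharesVertex (e : Sym2 V) (f : Sym2 V) → π e < π f).card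
    with hcnt
  -- step 1 : expectation as sum of counts
  have step1 : (∑ π : EdgeOrdering G, (numComponents G π : ℚ))
      = ∑ e : ↥G.edgeFinset, (cnt e : ℚ) := by
    have : ∀ π : EdgeOrdering G, (numComponents G π : ℚ) =
        ∑ e : ↥G.edgeFinset, if (∀ f : ↥G.edgeFinset, f ≠ e →
          SharesVertex (e : Sym2 V) (f : Sym2 V) → π e < π f) then (1 : ℚ) else 0 := by
      intro π
      rw [numComponents, Finset.card_filter]
      push_cast
      rfl
    rw [Finset.sum_congr rfl fun π _ => this π, Finset.sum_comm]
    refine Finset.sum_congr rfl fun e _ => ?_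
    rw [hcnt]; simp [Finset.sum_boole]
  -- step 2 : per-edge probability
  have step2 : ∀ e : ↥G.edgeFinset, (cnt e : ℚ) / N = 1 / ((degSum G (e : Sym2 V) : ℚ) - 1) := by
    intro e
    set S : Finset ↥G.edgeFinset :=
      univ.filter fun f : ↥G.edgeFinset => SharesVertex (e : Sym2 V) (f : Sym2 V) with hS
    have heS : e ∈ S := by
      rw [hS, mem_filter]
      exact ⟨mem_univ _, (e : Sym2 V).out.1, Sym2.out_fst_mem _, Sym2.out_fst_mem _⟩
    have hcard : cnt e * S.card = N := by
      simp only [hcnt, hNdef]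
      have hrw : (univ.filter fun π : EdgeOrdering G =>
          ∀ f : ↥G.edgeFinset, f ≠ e → SharesVertex (e : Sym2 V) (f : Sym2 V) → π e < π f)
          = univ.filter fun π : EdgeOrdering G => ∀ f ∈ S, f ≠ e → π e < π f := by
        refine Finset.filter_congr fun π _ => ?_
        constructor
        · intro hp f hf hfe
          exact hp f hfe (by rw [hS, mem_filter] at hf; exact hf.2)
        · intro hp f hfe hsh
          exact hp f (by rw [hS, mem_filter]; exact ⟨mem_univ _, hsh⟩) hfe
      rw [hrw]
      rw [show (univ.filter fun π : EdgeOrdering G => ∀ f ∈ S, f ≠ e → π e < π f).card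
            = Nat.card {π : EdgeOrdering G // ∀ f ∈ S, f ≠ e → π e < π f} by
          rw [Nat.card_eq_fintype_card, Fintype.card_subtype]]
      rw [show Fintype.card (EdgeOrdering G) = Nat.card (EdgeOrdering G) from
          (Nat.card_eq_fintype_card).symm]
      exact count_min S e heS
    -- compute S.card
    have hScard : S.card = degSum G (e : Sym2 V) - 1 := by
      rw [hS, card_subtype_filter G.edgeFinset (fun f => SharesVertex (e : Sym2 V) f)]
      exact shares_card_aux G e
    have hge : 2 ≤ degSum G (e : Sym2 V) := degSum_ge G h e
    have hm : (S.card : ℚ) = (degSum G (e : Sym2 V) : ℚ) - 1 := by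
      rw [hScard]
      have : 1 ≤ degSum G (e : Sym2 V) := by omega
      push_cast [Nat.cast_sub this]
      ring
    have hmpos : (0 : ℚ) < (degSum G (e : Sym2 V) : ℚ) - 1 := by
      have : (2 : ℚ) ≤ (degSum G (e : Sym2 V) : ℚ) := by exact_mod_cast hge
      linarith
    have hNQ : ((N : ℚ)) = (cnt e : ℚ) * ((degSum G (e : Sym2 V) : ℚ) - 1) := by
      rw [← hm]
      exact_mod_cast hcard.symm
    have hc0 : (cnt e : ℚ) ≠ 0 := by
      have : cnt e ≠ 0 := by
        intro h0
        rw [h0, zero_mul] at hcard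
        omega
      exact_mod_cast this
    rw [hNQ]
    rw [div_eq_div_iff (mul_ne_zero hc0 hmpos.ne') hmpos.ne']
    ring
  -- assemble
  rw [expComponents, ← hNdef, step1, Finset.sum_div]
  rw [Finset.sum_congr rfl fun e _ => step2 e]
  rw [← Finset.sum_coe_sort G.edgeFinset (fun e => 1 / ((degSum G e : ℚ) - 1))]


end ForestBuilding
end
end

section
/- For integers $N \geq t \geq 0$ and $0 \leq K \leq N$: $\sum_{d=0}^{t} \frac{1}{d+1}\cdot\frac{\binom{K}{d}\binom{N-K}{t-d}}{\binom{N}{t}} = \frac{N+1}{(t+1)(K+1)}\left(1 - \frac{\binom{N-K}{t+1}}{\binom{N+1}{t+1}}\right)$. -/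
lemma vand_key (K M t : ℕ) :
    ∑ d ∈ Finset.range (t + 1), (K+1).choose (d+1) * M.choose (t - d)
      = (K + 1 + M).choose (t+1) - M.choose (t+1) := by
  have h := Nat.add_choose_eq (K+1) M (t+1)
  rw [Finset.Nat.sum_antidiagonal_eq_sum_range_succ_mk] at h
  rw [Finset.sum_range_succ'] at h
  simp only [Nat.choose_zero_right, Nat.sub_zero, one_mul] at h
  have : ∀ d ∈ Finset.range (t+1), (K+1).choose (d+1) * M.choose (t+1-(d+1)) = (K+1).choose (d+1) * M.choose (t-d) := by
    intro d hd; rw [Nat.succ_sub_succ]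
  rw [Finset.sum_congr rfl this] at h
  omega

theorem hypergeometric_inverse_moment (N t K : ℕ) (ht : t ≤ N) (hK : K ≤ N) :
    ∑ d ∈ Finset.range (t + 1),
      (1 / ((d : ℚ) + 1)) * ((K.choose d : ℚ) * ((N - K).choose (t - d) : ℚ)) /
        (N.choose t : ℚ) =
    (((N : ℚ) + 1) / (((t : ℚ) + 1) * ((K : ℚ) + 1))) *
      (1 - ((N - K).choose (t + 1) : ℚ) / ((N + 1).choose (t + 1) : ℚ)) := by
  set M := N - K with hMdef
  have hKM : K + 1 + M = N + 1 := by omega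
  have key := vand_key K M t
  rw [hKM] at key
  have hle : M.choose (t+1) ≤ (N+1).choose (t+1) := Nat.choose_le_choose _ (by omega)
  have hkeyQ : ∑ d ∈ Finset.range (t+1), (((K+1).choose (d+1) : ℚ) * (M.choose (t-d) : ℚ))
      = ((N+1).choose (t+1) : ℚ) - (M.choose (t+1) : ℚ) := by
    have h2 := congrArg (Nat.cast : ℕ → ℚ) key
    push_cast [Nat.cast_sub hle] at h2
    exact h2
  have hCN : (N.choose t : ℚ) ≠ 0 := Nat.cast_ne_zero.mpr (Nat.choose_pos ht).ne'
  have hCN1 : ((N+1).choose (t+1) : ℚ) ≠ 0 := Nat.cast_ne_zero.mpr (Nat.choose_pos (by omega)).ne'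
  have hsucc : ((N:ℚ)+1) * (N.choose t : ℚ) = (((N+1).choose (t+1) : ℚ)) * ((t:ℚ)+1) := by
    exact_mod_cast congrArg (Nat.cast : ℕ → ℚ) (Nat.add_one_mul_choose_eq N t)
  have hK1 : ((K:ℚ)+1) ≠ 0 := by positivity
  have hterm : ∀ d ∈ Finset.range (t+1),
      (1 / ((d : ℚ) + 1)) * ((K.choose d : ℚ) * (M.choose (t - d) : ℚ)) / (N.choose t : ℚ)
        = (((K+1).choose (d+1) : ℚ) * (M.choose (t-d) : ℚ)) * (1 / (((K:ℚ)+1) * (N.choose t : ℚ))) := by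
    intro d hd
    have h : ((K:ℚ)+1) * (K.choose d : ℚ) = ((K+1).choose (d+1) : ℚ) * ((d:ℚ)+1) := by
      exact_mod_cast congrArg (Nat.cast : ℕ → ℚ) (Nat.add_one_mul_choose_eq K d)
    have hd1 : ((d:ℚ)+1) ≠ 0 := by positivity
    field_simp
    linear_combination ((M.choose (t-d)) : ℚ) * h
  rw [Finset.sum_congr rfl hterm, ← Finset.sum_mul, hkeyQ]
  have ht1 : ((t:ℚ)+1) ≠ 0 := by positivity
  field_simp
  linear_combination (-(((N+1).choose (t+1) : ℚ) - (M.choose (t+1) : ℚ))) * hsucc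
end

section
/- Let $G$ and $H$ be disjoint finite simple graphs without isolated vertices. In the forest building process on the disjoint union $G \mathbin{\dot\cup} H$, the generating polynomial of the number of components satisfies $p_{G \dot\cup H}(x) = p_G(x) \cdot p_H(x)$, equivalently $P(G \dot\cup H, k) = \sum_{\ell} P(G,\ell) P(H, k-\ell)$. -/
open Finset

noncomputable section
open scoped Classical
set_option maxHeartbeats 1000000

namespace ForestBuilding

variable {V : Type*} [Fintype V]

section Interleave
variable {α β : Type*} [Fintype α] [Fintype β] {m n : ℕ}

private lemma compl_card (S : Finset (Fin (m + n))) (hS : S.card = m) : Sᶜ.card = n := by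
  rw [Finset.card_compl, hS, Fintype.card_fin, Nat.add_sub_cancel_left]

def interleave (σ : α ≃ Fin m) (τ : β ≃ Fin n)
    (S : Finset (Fin (m + n))) (hS : S.card = m) : α ⊕ β → Fin (m + n)
  | Sum.inl a => (S.orderIsoOfFin hS (σ a) : Fin (m + n))
  | Sum.inr b => (Sᶜ.orderIsoOfFin (compl_card S hS) (τ b) : Fin (m + n))

lemma interleave_inl_mem (σ : α ≃ Fin m) (τ : β ≃ Fin n) (S : Finset (Fin (m + n)))
    (hS : S.card = m) (a : α) : interleave σ τ S hS (Sum.inl a) ∈ S :=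
  (S.orderIsoOfFin hS (σ a)).2

lemma interleave_inr_mem (σ : α ≃ Fin m) (τ : β ≃ Fin n) (S : Finset (Fin (m + n)))
    (hS : S.card = m) (b : β) : interleave σ τ S hS (Sum.inr b) ∈ Sᶜ :=
  (Sᶜ.orderIsoOfFin (compl_card S hS) (τ b)).2

lemma interleave_injective (σ : α ≃ Fin m) (τ : β ≃ Fin n) (S : Finset (Fin (m + n)))
    (hS : S.card = m) : Function.Injective (interleave σ τ S hS) := by
  intro x y h
  rcases x with a | b <;> rcases y with a' | b'
  · have : σ a = σ a' := (S.orderIsoOfFin hS).injective (Subtype.ext h)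
    exact congrArg Sum.inl (σ.injective this)
  · exact absurd (h ▸ interleave_inl_mem σ τ S hS a)
      (Finset.mem_compl.mp (interleave_inr_mem σ τ S hS b'))
  · exact absurd (h ▸ interleave_inr_mem σ τ S hS b)
      (by simpa using (interleave_inl_mem σ τ S hS a'))
  · have : τ b = τ b' := (Sᶜ.orderIsoOfFin (compl_card S hS)).injective (Subtype.ext h)
    exact congrArg Sum.inr (τ.injective this)

lemma interleave_lt_inl (σ : α ≃ Fin m) (τ : β ≃ Fin n) (S : Finset (Fin (m + n)))
    (hS : S.card = m) (a a' : α) :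
    interleave σ τ S hS (Sum.inl a) < interleave σ τ S hS (Sum.inl a') ↔ σ a < σ a' := by
  rw [show interleave σ τ S hS (Sum.inl a) = (S.orderIsoOfFin hS (σ a) : Fin (m+n)) from rfl,
      show interleave σ τ S hS (Sum.inl a') = (S.orderIsoOfFin hS (σ a') : Fin (m+n)) from rfl,
      Subtype.coe_lt_coe, OrderIso.lt_iff_lt]

lemma interleave_lt_inr (σ : α ≃ Fin m) (τ : β ≃ Fin n) (S : Finset (Fin (m + n)))
    (hS : S.card = m) (b b' : β) :
    interleave σ τ S hS (Sum.inr b) < interleave σ τ S hS (Sum.inr b') ↔ τ b < τ b' := by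
  rw [show interleave σ τ S hS (Sum.inr b) = (Sᶜ.orderIsoOfFin (compl_card S hS) (τ b) : Fin (m+n)) from rfl,
      show interleave σ τ S hS (Sum.inr b') = (Sᶜ.orderIsoOfFin (compl_card S hS) (τ b') : Fin (m+n)) from rfl,
      Subtype.coe_lt_coe, OrderIso.lt_iff_lt]

variable (ha : Fintype.card α = m) (hb : Fintype.card β = n)

def pack (p : (α ≃ Fin m) × (β ≃ Fin n) × {S : Finset (Fin (m + n)) // S.card = m}) :
    α ⊕ β ≃ Fin (m + n) :=
  Equiv.ofBijective (interleave p.1 p.2.1 p.2.2.1 p.2.2.2)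
    ((Fintype.bijective_iff_injective_and_card _).2
      ⟨interleave_injective _ _ _ _, by simp [ha, hb]⟩)

lemma pack_apply (p) (x : α ⊕ β) : pack ha hb p x = interleave p.1 p.2.1 p.2.2.1 p.2.2.2 x := rfl

lemma mem_iff_exists (σ : α ≃ Fin m) (τ : β ≃ Fin n) (S : Finset (Fin (m + n)))
    (hS : S.card = m) (i : Fin (m + n)) :
    i ∈ S ↔ ∃ a, interleave σ τ S hS (Sum.inl a) = i := by
  constructor
  · intro hi
    refine ⟨σ.symm ((S.orderIsoOfFin hS).symm ⟨i, hi⟩), ?_⟩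
    show ((S.orderIsoOfFin hS (σ (σ.symm _))) : Fin (m + n)) = i
    rw [Equiv.apply_symm_apply, OrderIso.apply_symm_apply]
  · rintro ⟨a, rfl⟩; exact interleave_inl_mem σ τ S hS a

lemma pack_bijective : Function.Bijective (pack ha hb) := by
  constructor
  · rintro ⟨σ, τ, S, hS⟩ ⟨σ', τ', S', hS'⟩ h
    have hfun : ∀ x, interleave σ τ S hS x = interleave σ' τ' S' hS' x := fun x =>
      congrFun (congrArg (fun (e : α ⊕ β ≃ Fin (m+n)) => (e : α ⊕ β → Fin (m+n))) h) x
    have hSS : S = S' := by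
      ext i
      rw [mem_iff_exists σ τ S hS, mem_iff_exists σ' τ' S' hS']
      exact ⟨fun ⟨a, hA⟩ => ⟨a, (hfun (Sum.inl a)) ▸ hA⟩,
        fun ⟨a, hA⟩ => ⟨a, (hfun (Sum.inl a)).symm ▸ hA⟩⟩
    subst hSS
    have hσ : σ = σ' := by
      apply Equiv.ext; intro a
      have := hfun (Sum.inl a)
      exact (S.orderIsoOfFin hS).injective (Subtype.ext this)
    have hτ : τ = τ' := by
      apply Equiv.ext; intro b
      have := hfun (Sum.inr b)
      exact (Sᶜ.orderIsoOfFin (compl_card S hS)).injective (Subtype.ext this)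
    simp [hσ, hτ]
  · intro ρ
    set S : Finset (Fin (m + n)) := Finset.univ.image (fun a => ρ (Sum.inl a)) with hSdef
    have hS : S.card = m := by
      rw [hSdef]
      rw [Finset.card_image_of_injective _ (fun a a' h => Sum.inl_injective (ρ.injective h) : Function.Injective fun a => ρ (Sum.inl a))]
      rw [Finset.card_univ, ha]
    have hmemL : ∀ a, ρ (Sum.inl a) ∈ S := fun a => Finset.mem_image_of_mem _ (Finset.mem_univ a)
    have hmemR : ∀ b, ρ (Sum.inr b) ∈ Sᶜ := by
      intro b
      rw [Finset.mem_compl, hSdef]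
      intro hmem
      obtain ⟨a, _, hA⟩ := Finset.mem_image.mp hmem
      exact absurd (ρ.injective hA) (by simp)
    have hσbij : Function.Bijective (fun a => (S.orderIsoOfFin hS).symm ⟨ρ (Sum.inl a), hmemL a⟩) := by
      refine (Fintype.bijective_iff_injective_and_card _).2 ⟨?_, by simp [ha]⟩
      intro a a' hAA
      exact Sum.inl_injective (ρ.injective (congrArg Subtype.val
        ((S.orderIsoOfFin hS).symm.injective hAA : (⟨ρ (Sum.inl a), _⟩ : {x // x ∈ S}) = ⟨ρ (Sum.inl a'), _⟩)))
    have hτbij : Function.Bijective (fun b => (Sᶜ.orderIsoOfFin (compl_card S hS)).symm ⟨ρ (Sum.inr b), hmemR b⟩) := by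
      refine (Fintype.bijective_iff_injective_and_card _).2 ⟨?_, by simp [hb, Finset.card_compl, hS]⟩
      intro b b' hBB
      exact Sum.inr_injective (ρ.injective (congrArg Subtype.val
        ((Sᶜ.orderIsoOfFin (compl_card S hS)).symm.injective hBB)))
    refine ⟨⟨Equiv.ofBijective _ hσbij, Equiv.ofBijective _ hτbij, ⟨S, hS⟩⟩, ?_⟩
    apply Equiv.ext
    rintro (a | b)
    · show ((S.orderIsoOfFin hS ((S.orderIsoOfFin hS).symm ⟨ρ (Sum.inl a), hmemL a⟩)) : Fin (m+n)) = ρ (Sum.inl a)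
      rw [OrderIso.apply_symm_apply]
    · show ((Sᶜ.orderIsoOfFin (compl_card S hS) ((Sᶜ.orderIsoOfFin (compl_card S hS)).symm ⟨ρ (Sum.inr b), hmemR b⟩)) : Fin (m+n)) = ρ (Sum.inr b)
      rw [OrderIso.apply_symm_apply]

end Interleave

def cnt (G : SimpleGraph V) {ι : Type*} [LinearOrder ι] (π : ↥G.edgeFinset → ι) : ℕ :=
  (univ.filter fun e : ↥G.edgeFinset =>
    ∀ f : ↥G.edgeFinset, f ≠ e → SharesVertex (e : Sym2 V) (f : Sym2 V) → π e < π f).card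

lemma numComponents_eq_cnt (G : SimpleGraph V) (π : EdgeOrdering G) :
    numComponents G π = cnt G (fun e => π e) := rfl

private lemma card_filter_sum_split {γ δ ε : Type*} [Fintype γ] [Fintype δ] [Fintype ε]
    {p : γ → Prop} {q : δ → Prop} {r : ε → Prop}
    {ip : DecidablePred p} {iq : DecidablePred q} {ir : DecidablePred r}
    (Φ : δ ⊕ ε → γ) (hinj : Function.Injective Φ) (hsurj : Function.Surjective Φ)
    (hq : ∀ d, p (Φ (Sum.inl d)) ↔ q d) (hr : ∀ e, p (Φ (Sum.inr e)) ↔ r e) :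
    (@Finset.filter _ p ip univ).card =
      (@Finset.filter _ q iq univ).card + (@Finset.filter _ r ir univ).card := by
  letI := ip; letI := iq; letI := ir
  rw [← Finset.card_disjSum]
  refine (Finset.card_nbij Φ ?_ ?_ ?_).symm
  · rintro (d | e) hx
    · rw [Finset.mem_coe, Finset.inl_mem_disjSum, Finset.mem_filter] at hx
      exact Finset.mem_filter.mpr ⟨Finset.mem_univ _, (hq d).mpr hx.2⟩
    · rw [Finset.mem_coe, Finset.inr_mem_disjSum, Finset.mem_filter] at hx
      exact Finset.mem_filter.mpr ⟨Finset.mem_univ _, (hr e).mpr hx.2⟩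
  · exact fun x _ y _ h => hinj h
  · intro t ht
    rw [Finset.mem_coe, Finset.mem_filter] at ht
    obtain ⟨x, rfl⟩ := hsurj t
    rcases x with d | e
    · refine ⟨Sum.inl d, ?_, rfl⟩
      rw [Finset.mem_coe, Finset.inl_mem_disjSum, Finset.mem_filter]
      exact ⟨Finset.mem_univ _, (hq d).mp ht.2⟩
    · refine ⟨Sum.inr e, ?_, rfl⟩
      rw [Finset.mem_coe, Finset.inr_mem_disjSum, Finset.mem_filter]
      exact ⟨Finset.mem_univ _, (hr e).mp ht.2⟩

private lemma filter_card_congr {γ : Type*} (s : Finset γ) (p q : γ → Prop)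
    [DecidablePred p] [DecidablePred q] (hpq : ∀ t, p t ↔ q t) :
    (s.filter p).card = (s.filter q).card := by
  refine congrArg Finset.card ?_
  ext t
  simp only [Finset.mem_filter]
  exact and_congr_right (fun _ => hpq t)

lemma cnt_congr (G : SimpleGraph V) {ι κ : Type*} [LinearOrder ι] [LinearOrder κ]
    (π : ↥G.edgeFinset → ι) (π' : ↥G.edgeFinset → κ)
    (h : ∀ e f, π e < π f ↔ π' e < π' f) : cnt G π = cnt G π' := by
  unfold cnt
  refine congrArg Finset.card ?_
  ext e
  simp only [Finset.mem_filter, Finset.mem_univ, true_and]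
  constructor <;> intro he f hf hs
  · exact (h e f).mp (he f hf hs)
  · exact (h e f).mpr (he f hf hs)

section Graphs
variable {W : Type*} [Fintype W] (G : SimpleGraph V) (H : SimpleGraph W) (K : SimpleGraph (V ⊕ W))
variable (hGK : ∀ a b : V, K.Adj (Sum.inl a) (Sum.inl b) ↔ G.Adj a b)
variable (hHK : ∀ a b : W, K.Adj (Sum.inr a) (Sum.inr b) ↔ H.Adj a b)
variable (hcross : ∀ (a : V) (b : W), ¬ K.Adj (Sum.inl a) (Sum.inr b))

include hGK in
lemma mapl_mem {e : Sym2 V} (he : e ∈ G.edgeFinset) :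
    Sym2.map Sum.inl e ∈ K.edgeFinset := by
  rw [SimpleGraph.mem_edgeFinset] at he ⊢
  induction e using Sym2.ind with
  | _ a b =>
    rw [Sym2.map_pair_eq]
    exact (K.mem_edgeSet).mpr ((hGK a b).mpr ((G.mem_edgeSet).mp he))

include hHK in
lemma mapr_mem {e : Sym2 W} (he : e ∈ H.edgeFinset) :
    Sym2.map Sum.inr e ∈ K.edgeFinset := by
  rw [SimpleGraph.mem_edgeFinset] at he ⊢
  induction e using Sym2.ind with
  | _ a b =>
    rw [Sym2.map_pair_eq]
    exact (K.mem_edgeSet).mpr ((hHK a b).mpr ((H.mem_edgeSet).mp he))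

def edgeMap : ↥G.edgeFinset ⊕ ↥H.edgeFinset → ↥K.edgeFinset
  | Sum.inl e => ⟨Sym2.map Sum.inl (e : Sym2 V), mapl_mem G K hGK e.2⟩
  | Sum.inr f => ⟨Sym2.map Sum.inr (f : Sym2 W), mapr_mem H K hHK f.2⟩

lemma shares_map_inl (e f : Sym2 V) :
    SharesVertex (Sym2.map (Sum.inl : V → V ⊕ W) e) (Sym2.map Sum.inl f) ↔ SharesVertex e f := by
  constructor
  · rintro ⟨v, hv1, hv2⟩
    obtain ⟨a, ha, rfl⟩ := Sym2.mem_map.mp hv1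
    obtain ⟨b, hbmem, hb⟩ := Sym2.mem_map.mp hv2
    exact ⟨a, ha, Sum.inl_injective hb ▸ hbmem⟩
  · rintro ⟨v, hv1, hv2⟩
    exact ⟨Sum.inl v, Sym2.mem_map.mpr ⟨v, hv1, rfl⟩, Sym2.mem_map.mpr ⟨v, hv2, rfl⟩⟩

lemma shares_map_inr (e f : Sym2 W) :
    SharesVertex (Sym2.map (Sum.inr : W → V ⊕ W) e) (Sym2.map Sum.inr f) ↔ SharesVertex e f := by
  constructor
  · rintro ⟨v, hv1, hv2⟩
    obtain ⟨a, ha, rfl⟩ := Sym2.mem_map.mp hv1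
    obtain ⟨b, hbmem, hb⟩ := Sym2.mem_map.mp hv2
    exact ⟨a, ha, Sum.inr_injective hb ▸ hbmem⟩
  · rintro ⟨v, hv1, hv2⟩
    exact ⟨Sum.inr v, Sym2.mem_map.mpr ⟨v, hv1, rfl⟩, Sym2.mem_map.mpr ⟨v, hv2, rfl⟩⟩

lemma not_shares_inl_inr (e : Sym2 V) (f : Sym2 W) :
    ¬ SharesVertex (Sym2.map (Sum.inl : V → V ⊕ W) e) (Sym2.map Sum.inr f) := by
  rintro ⟨v, hv1, hv2⟩
  obtain ⟨a, _, rfl⟩ := Sym2.mem_map.mp hv1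
  obtain ⟨b, _, hb⟩ := Sym2.mem_map.mp hv2
  exact Sum.inl_ne_inr hb.symm

lemma not_shares_inr_inl (e : Sym2 W) (f : Sym2 V) :
    ¬ SharesVertex (Sym2.map (Sum.inr : W → V ⊕ W) e) (Sym2.map Sum.inl f) := by
  rintro ⟨v, hv1, hv2⟩
  obtain ⟨a, _, rfl⟩ := Sym2.mem_map.mp hv1
  obtain ⟨b, _, hb⟩ := Sym2.mem_map.mp hv2
  exact Sum.inl_ne_inr hb

lemma edgeMap_injective : Function.Injective (edgeMap G H K hGK hHK) := by
  rintro (e | e) (f | f) h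
  · have := Subtype.ext_iff.mp h
    exact congrArg Sum.inl (Subtype.ext (Sym2.map.injective Sum.inl_injective this))
  · exfalso
    have h2 : Sym2.map (Sum.inl : V → V ⊕ W) (e : Sym2 V) = Sym2.map Sum.inr (f : Sym2 W) :=
      Subtype.ext_iff.mp h
    obtain ⟨v, hv⟩ : ∃ v, v ∈ (e : Sym2 V) := ⟨(e : Sym2 V).out.1, Sym2.out_fst_mem _⟩
    have hmm : Sum.inl v ∈ Sym2.map (Sum.inr : W → V ⊕ W) (f : Sym2 W) := by
      rw [← h2]; exact Sym2.mem_map.mpr ⟨v, hv, rfl⟩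
    obtain ⟨b, _, hb⟩ := Sym2.mem_map.mp hmm
    exact Sum.inr_ne_inl hb
  · exfalso
    have h2 : Sym2.map (Sum.inr : W → V ⊕ W) (e : Sym2 W) = Sym2.map Sum.inl (f : Sym2 V) :=
      Subtype.ext_iff.mp h
    obtain ⟨v, hv⟩ : ∃ v, v ∈ (e : Sym2 W) := ⟨(e : Sym2 W).out.1, Sym2.out_fst_mem _⟩
    have hmm : Sum.inr v ∈ Sym2.map (Sum.inl : V → V ⊕ W) (f : Sym2 V) := by
      rw [← h2]; exact Sym2.mem_map.mpr ⟨v, hv, rfl⟩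
    obtain ⟨b, _, hb⟩ := Sym2.mem_map.mp hmm
    exact Sum.inl_ne_inr hb
  · have := Subtype.ext_iff.mp h
    exact congrArg Sum.inr (Subtype.ext (Sym2.map.injective Sum.inr_injective this))

include hcross in
lemma edgeMap_surjective : Function.Surjective (edgeMap G H K hGK hHK) := by
  rintro ⟨s, hs⟩
  revert hs
  induction s using Sym2.ind with
  | _ x y =>
    intro hs
    have hadj : K.Adj x y := (K.mem_edgeSet).mp (SimpleGraph.mem_edgeFinset.mp hs)
    rcases x with a | a <;> rcases y with b | b
    · refine ⟨Sum.inl ⟨s(a, b), ?_⟩, ?_⟩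
      · exact SimpleGraph.mem_edgeFinset.mpr ((G.mem_edgeSet).mpr ((hGK a b).mp hadj))
      · exact Subtype.ext (Sym2.map_pair_eq _ _ _)
    · exact absurd hadj (hcross a b)
    · exact absurd hadj.symm (hcross b a)
    · refine ⟨Sum.inr ⟨s(a, b), ?_⟩, ?_⟩
      · exact SimpleGraph.mem_edgeFinset.mpr ((H.mem_edgeSet).mpr ((hHK a b).mp hadj))
      · exact Subtype.ext (Sym2.map_pair_eq _ _ _)

include hGK hHK hcross in
lemma cnt_split {ι : Type*} [LinearOrder ι] (π : ↥K.edgeFinset → ι) :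
    cnt K π = cnt G (fun e => π (edgeMap G H K hGK hHK (Sum.inl e)))
      + cnt H (fun f => π (edgeMap G H K hGK hHK (Sum.inr f))) := by
  classical
  have hinj := edgeMap_injective G H K hGK hHK
  have hsurj := edgeMap_surjective G H K hGK hHK hcross
  set Φ := edgeMap G H K hGK hHK with hΦdef
  set pK : ↥K.edgeFinset → Prop := fun t =>
    ∀ f' : ↥K.edgeFinset, f' ≠ t →
      SharesVertex (t : Sym2 (V ⊕ W)) (f' : Sym2 (V ⊕ W)) → π t < π f' with hpK
  set pG : ↥G.edgeFinset → Prop := fun e =>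
    ∀ f : ↥G.edgeFinset, f ≠ e → SharesVertex (e : Sym2 V) (f : Sym2 V) →
      π (Φ (Sum.inl e)) < π (Φ (Sum.inl f)) with hpG
  set pH : ↥H.edgeFinset → Prop := fun e =>
    ∀ f : ↥H.edgeFinset, f ≠ e → SharesVertex (e : Sym2 W) (f : Sym2 W) →
      π (Φ (Sum.inr e)) < π (Φ (Sum.inr f)) with hpH
  have hiffG : ∀ e : ↥G.edgeFinset, pK (Φ (Sum.inl e)) ↔ pG e := by
    intro e
    constructor
    · intro hq f hf hs
      refine hq (Φ (Sum.inl f)) (fun hc => hf (Sum.inl_injective (hinj hc))) ?_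
      exact (shares_map_inl (e : Sym2 V) (f : Sym2 V)).mpr hs
    · intro hp f' hne hs
      obtain ⟨x, rfl⟩ := hsurj f'
      rcases x with f | f
      · exact hp f (fun hfe => hne (by rw [hfe])) ((shares_map_inl _ _).mp hs)
      · exact absurd hs (not_shares_inl_inr _ _)
  have hiffH : ∀ e : ↥H.edgeFinset, pK (Φ (Sum.inr e)) ↔ pH e := by
    intro e
    constructor
    · intro hq f hf hs
      refine hq (Φ (Sum.inr f)) (fun hc => hf (Sum.inr_injective (hinj hc))) ?_
      exact (shares_map_inr (e : Sym2 W) (f : Sym2 W)).mpr hs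
    · intro hp f' hne hs
      obtain ⟨x, rfl⟩ := hsurj f'
      rcases x with f | f
      · exact absurd hs (not_shares_inr_inl _ _)
      · exact hp f (fun hfe => hne (by rw [hfe])) ((shares_map_inr _ _).mp hs)
  unfold cnt
  exact card_filter_sum_split Φ hinj hsurj hiffG hiffH

include hGK hHK hcross in
lemma key_sum :
    ∃ C : ℕ, 0 < C ∧
      Fintype.card (EdgeOrdering K) =
        C * (Fintype.card (EdgeOrdering G) * Fintype.card (EdgeOrdering H)) ∧
      ∀ F : ℕ → ℚ, (∑ π : EdgeOrdering K, F (numComponents K π)) =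
        (C : ℚ) * ∑ σ : EdgeOrdering G, ∑ τ : EdgeOrdering H,
          F (numComponents G σ + numComponents H τ) := by
  classical
  set m := G.edgeFinset.card with hm
  set n := H.edgeFinset.card with hn
  have hinj := edgeMap_injective G H K hGK hHK
  have hsurj := edgeMap_surjective G H K hGK hHK hcross
  set Φ := edgeMap G H K hGK hHK with hΦdef
  have hbijΦ : Function.Bijective Φ := ⟨hinj, hsurj⟩
  have ha : Fintype.card ↥G.edgeFinset = m := Fintype.card_coe _
  have hb : Fintype.card ↥H.edgeFinset = n := Fintype.card_coe _
  have hcard : K.edgeFinset.card = m + n := by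
    have h1 : Fintype.card (↥G.edgeFinset ⊕ ↥H.edgeFinset) = Fintype.card ↥K.edgeFinset :=
      Fintype.card_of_bijective hbijΦ
    rw [Fintype.card_sum, ha, hb, Fintype.card_coe] at h1
    exact h1.symm
  set Θ : EdgeOrdering K ≃ (↥G.edgeFinset ⊕ ↥H.edgeFinset ≃ Fin (m + n)) :=
    Equiv.equivCongr (Equiv.ofBijective Φ hbijΦ).symm (finCongr hcard) with hΘdef
  have hΘ : ∀ (π : EdgeOrdering K) (x : ↥G.edgeFinset ⊕ ↥H.edgeFinset),
      Θ π x = finCongr hcard (π (Φ x)) := fun _ _ => rfl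
  have hfc : ∀ i j : Fin K.edgeFinset.card, finCongr hcard i < finCongr hcard j ↔ i < j := by
    intro i j; exact Iff.rfl
  refine ⟨Fintype.card {S : Finset (Fin (m + n)) // S.card = m}, ?_, ?_, ?_⟩
  · rw [Fintype.card_pos_iff]
    obtain ⟨S, -, hS⟩ := Finset.exists_subset_card_eq (s := (univ : Finset (Fin (m + n)))) (n := m)
      (by simp [Finset.card_univ])
    exact ⟨⟨S, hS⟩⟩
  · have h2 : Fintype.card (EdgeOrdering K) = Fintype.card
        ((EdgeOrdering G) × (EdgeOrdering H) × {S : Finset (Fin (m + n)) // S.card = m}) :=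
      Fintype.card_congr (Θ.trans (Equiv.ofBijective _ (pack_bijective ha hb)).symm)
    rw [h2, Fintype.card_prod, Fintype.card_prod]
    ring
  · intro F
    set g : (↥G.edgeFinset ⊕ ↥H.edgeFinset ≃ Fin (m + n)) → ℚ := fun ρ =>
      F (cnt G (fun e => ρ (Sum.inl e)) + cnt H (fun f => ρ (Sum.inr f))) with hgdef
    have step1 : (∑ π : EdgeOrdering K, F (numComponents K π)) =
        ∑ ρ : (↥G.edgeFinset ⊕ ↥H.edgeFinset ≃ Fin (m + n)), g ρ := by
      refine Fintype.sum_equiv Θ _ _ ?_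
      intro π
      have hsplit := cnt_split G H K hGK hHK hcross (fun t => π t)
      have hcg : cnt G (fun e => Θ π (Sum.inl e)) = cnt G (fun e => π (Φ (Sum.inl e))) :=
        cnt_congr G _ _ (fun e f => hfc _ _)
      have hch : cnt H (fun e => Θ π (Sum.inr e)) = cnt H (fun e => π (Φ (Sum.inr e))) :=
        cnt_congr H _ _ (fun e f => hfc _ _)
      rw [hgdef]
      dsimp only
      rw [numComponents_eq_cnt, hsplit]
      rw [show (fun e => Θ π (Sum.inl e)) = (fun e => (Θ π) (Sum.inl e)) from rfl] at hcg
      rw [hcg, hch]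
    have step2 : (∑ ρ : (↥G.edgeFinset ⊕ ↥H.edgeFinset ≃ Fin (m + n)), g ρ) =
        ∑ p : (EdgeOrdering G) × (EdgeOrdering H) × {S : Finset (Fin (m + n)) // S.card = m},
          g (pack ha hb p) :=
      (Fintype.sum_bijective (pack ha hb) (pack_bijective ha hb) _ g (fun _ => rfl)).symm
    have hpackval : ∀ p : (EdgeOrdering G) × (EdgeOrdering H) ×
        {S : Finset (Fin (m + n)) // S.card = m},
        g (pack ha hb p) = F (numComponents G p.1 + numComponents H p.2.1) := by
      rintro ⟨σ, τ, S, hS⟩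
      rw [hgdef]
      dsimp only
      have hcg : cnt G (fun e => pack ha hb (σ, τ, ⟨S, hS⟩) (Sum.inl e)) = cnt G (fun e => σ e) :=
        cnt_congr G _ _ (fun e f => interleave_lt_inl σ τ S hS e f)
      have hch : cnt H (fun e => pack ha hb (σ, τ, ⟨S, hS⟩) (Sum.inr e)) = cnt H (fun e => τ e) :=
        cnt_congr H _ _ (fun e f => interleave_lt_inr σ τ S hS e f)
      rw [hcg, hch, numComponents_eq_cnt G σ, numComponents_eq_cnt H τ]
    rw [step1, step2]
    calc ∑ p : (EdgeOrdering G) × (EdgeOrdering H) × {S : Finset (Fin (m + n)) // S.card = m},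
          g (pack ha hb p)
        = ∑ p : (EdgeOrdering G) × (EdgeOrdering H) × {S : Finset (Fin (m + n)) // S.card = m},
          F (numComponents G p.1 + numComponents H p.2.1) := by
          exact Finset.sum_congr rfl (fun p _ => hpackval p)
      _ = ∑ σ : EdgeOrdering G, ∑ q : (EdgeOrdering H) × {S : Finset (Fin (m + n)) // S.card = m},
          F (numComponents G σ + numComponents H q.1) := by
          rw [Fintype.sum_prod_type]
      _ = ∑ σ : EdgeOrdering G, ∑ τ : EdgeOrdering H,
          ∑ _S : {S : Finset (Fin (m + n)) // S.card = m},
          F (numComponents G σ + numComponents H τ) := by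
          refine Finset.sum_congr rfl (fun σ _ => ?_)
          rw [Fintype.sum_prod_type]
      _ = (Fintype.card {S : Finset (Fin (m + n)) // S.card = m} : ℚ) *
          ∑ σ : EdgeOrdering G, ∑ τ : EdgeOrdering H,
            F (numComponents G σ + numComponents H τ) := by
          simp only [Finset.sum_const, Finset.card_univ, nsmul_eq_mul, ← Finset.mul_sum]

private lemma sum_univ_congr {γ M : Type*} [AddCommMonoid M] (i j : Fintype γ) (f : γ → M) :
    @Finset.sum γ M _ (@Finset.univ γ i) f = @Finset.sum γ M _ (@Finset.univ γ j) f := by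
  cases Subsingleton.elim i j; rfl

private lemma card_congr' {γ : Type*} (i j : Fintype γ) :
    @Fintype.card γ i = @Fintype.card γ j := by
  cases Subsingleton.elim i j; rfl

private lemma filter_univ_card_congr {γ : Type*} (i j : Fintype γ) (p : γ → Prop)
    (ip jp : DecidablePred p) :
    (@Finset.filter γ p ip (@Finset.univ γ i)).card =
      (@Finset.filter γ p jp (@Finset.univ γ j)).card := by
  cases Subsingleton.elim i j
  exact @filter_card_congr γ _ p p ip jp (fun t => Iff.rfl)

private lemma conv_sum {A B : Type*} [Fintype A] [Fintype B] (f : A → ℕ) (g : B → ℕ) (k : ℕ) :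
    (∑ σ : A, ∑ τ : B, if f σ + g τ = k then (1:ℚ) else 0)
      = ∑ ℓ ∈ Finset.range (k+1),
          (∑ σ : A, if f σ = ℓ then (1:ℚ) else 0) * (∑ τ : B, if g τ = k - ℓ then (1:ℚ) else 0) := by
  have hpt : ∀ a b : ℕ, (if a + b = k then (1:ℚ) else 0)
      = ∑ ℓ ∈ Finset.range (k+1), (if a = ℓ then (1:ℚ) else 0) * (if b = k - ℓ then (1:ℚ) else 0) := by
    intro a b
    by_cases hab : a + b = k
    · rw [if_pos hab, Finset.sum_eq_single a]
      · rw [if_pos rfl, if_pos (by omega), one_mul]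
      · intro ℓ _ hne
        rw [if_neg (fun h => hne h.symm), zero_mul]
      · intro hnotmem
        exact absurd (Finset.mem_range.mpr (by omega)) hnotmem
    · rw [if_neg hab]
      symm
      apply Finset.sum_eq_zero
      intro ℓ hℓ
      rw [Finset.mem_range] at hℓ
      by_cases h1 : a = ℓ
      · by_cases h2 : b = k - ℓ
        · exact absurd (by omega) hab
        · rw [if_neg h2, mul_zero]
      · rw [if_neg h1, zero_mul]
  calc (∑ σ : A, ∑ τ : B, if f σ + g τ = k then (1:ℚ) else 0)
      = ∑ σ : A, ∑ τ : B, ∑ ℓ ∈ Finset.range (k+1),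
          (if f σ = ℓ then (1:ℚ) else 0) * (if g τ = k - ℓ then (1:ℚ) else 0) :=
        Finset.sum_congr rfl fun σ _ => Finset.sum_congr rfl fun τ _ => hpt _ _
    _ = ∑ σ : A, ∑ ℓ ∈ Finset.range (k+1), ∑ τ : B,
          (if f σ = ℓ then (1:ℚ) else 0) * (if g τ = k - ℓ then (1:ℚ) else 0) :=
        Finset.sum_congr rfl fun σ _ => Finset.sum_comm
    _ = ∑ ℓ ∈ Finset.range (k+1), ∑ σ : A, ∑ τ : B,
          (if f σ = ℓ then (1:ℚ) else 0) * (if g τ = k - ℓ then (1:ℚ) else 0) :=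
        Finset.sum_comm
    _ = ∑ ℓ ∈ Finset.range (k+1),
          (∑ σ : A, if f σ = ℓ then (1:ℚ) else 0) * (∑ τ : B, if g τ = k - ℓ then (1:ℚ) else 0) :=
        Finset.sum_congr rfl fun ℓ _ => (Finset.sum_mul_sum _ _ _ _).symm

end Graphs

/-- **Disjoint unions** (part of Theorem 5 of the paper):  if `K` is the
disjoint union of graphs `G` and `H` (each without isolated vertices), then the
component generating polynomial of `K` is the product of those of `G` and `H`;
equivalently `P(G ∪̇ H, k) = ∑ₗ P(G,ℓ) P(H, k-ℓ)`. -/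
theorem pPoly_disjoint_union {W : Type*} [Fintype W]
    (G : SimpleGraph V) (H : SimpleGraph W) (K : SimpleGraph (V ⊕ W))
    (hGK : ∀ a b : V, K.Adj (Sum.inl a) (Sum.inl b) ↔ G.Adj a b)
    (hHK : ∀ a b : W, K.Adj (Sum.inr a) (Sum.inr b) ↔ H.Adj a b)
    (hcross : ∀ (a : V) (b : W), ¬ K.Adj (Sum.inl a) (Sum.inr b))
    (hG : ∀ v : V, 0 < G.degree v) (hH : ∀ w : W, 0 < H.degree w) :
    (∀ x : ℚ, pPoly K x = pPoly G x * pPoly H x) ∧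
      (∀ k : ℕ, P K k = ∑ ℓ ∈ Finset.range (k + 1), P G ℓ * P H (k - ℓ)) := by
  obtain ⟨C, hCpos, hcard, hsum⟩ := key_sum G H K hGK hHK hcross
  have hcG : 0 < Fintype.card (EdgeOrdering G) :=
    Fintype.card_pos_iff.mpr ⟨Fintype.equivFinOfCardEq (Fintype.card_coe _)⟩
  have hcH : 0 < Fintype.card (EdgeOrdering H) :=
    Fintype.card_pos_iff.mpr ⟨Fintype.equivFinOfCardEq (Fintype.card_coe _)⟩
  have haG : (Fintype.card (EdgeOrdering G) : ℚ) ≠ 0 := Nat.cast_ne_zero.mpr hcG.ne'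
  have haH : (Fintype.card (EdgeOrdering H) : ℚ) ≠ 0 := Nat.cast_ne_zero.mpr hcH.ne'
  have hCne : (C : ℚ) ≠ 0 := Nat.cast_ne_zero.mpr hCpos.ne'
  constructor
  · intro x
    have h1 : (∑ π : EdgeOrdering K, x ^ numComponents K π)
        = (C : ℚ) * ∑ σ : EdgeOrdering G, ∑ τ : EdgeOrdering H,
            x ^ (numComponents G σ + numComponents H τ) := hsum (fun t => x ^ t)
    have h3 : (∑ σ : EdgeOrdering G, ∑ τ : EdgeOrdering H,
          x ^ (numComponents G σ + numComponents H τ))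
        = (∑ σ : EdgeOrdering G, x ^ numComponents G σ) *
            (∑ τ : EdgeOrdering H, x ^ numComponents H τ) := by
      rw [Finset.sum_mul_sum]
      exact Finset.sum_congr rfl fun σ _ => Finset.sum_congr rfl fun τ _ => pow_add x _ _
    unfold pPoly
    rw [show _ = (∑ π : EdgeOrdering K, x ^ numComponents K π) from sum_univ_congr _ _ _,
      show _ = (Fintype.card (EdgeOrdering K)) from card_congr' _ _]
    rw [h1, h3, hcard]
    push_cast
    rw [mul_div_mul_left _ _ hCne, div_mul_div_comm]
  · intro k
    have e1 : ((univ.filter fun π : EdgeOrdering K => numComponents K π = k).card : ℚ)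
        = ∑ π : EdgeOrdering K, if numComponents K π = k then (1:ℚ) else 0 := by
      rw [Finset.sum_boole]
    have h1 : (∑ π : EdgeOrdering K, if numComponents K π = k then (1:ℚ) else 0)
        = (C : ℚ) * ∑ σ : EdgeOrdering G, ∑ τ : EdgeOrdering H,
            if numComponents G σ + numComponents H τ = k then (1:ℚ) else 0 :=
      hsum (fun t => if t = k then (1:ℚ) else 0)
    have h2 : (∑ σ : EdgeOrdering G, ∑ τ : EdgeOrdering H,
          (if numComponents G σ + numComponents H τ = k then (1:ℚ) else 0))
        = ∑ ℓ ∈ Finset.range (k+1),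
            (∑ σ : EdgeOrdering G, if numComponents G σ = ℓ then (1:ℚ) else 0) *
              (∑ τ : EdgeOrdering H, if numComponents H τ = k - ℓ then (1:ℚ) else 0) :=
      conv_sum _ _ k
    have h3 : (∑ ℓ ∈ Finset.range (k + 1), P G ℓ * P H (k - ℓ))
        = (∑ ℓ ∈ Finset.range (k+1),
            (∑ σ : EdgeOrdering G, if numComponents G σ = ℓ then (1:ℚ) else 0) *
              (∑ τ : EdgeOrdering H, if numComponents H τ = k - ℓ then (1:ℚ) else 0)) /
          ((Fintype.card (EdgeOrdering G) : ℚ) * (Fintype.card (EdgeOrdering H) : ℚ)) := by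
      rw [Finset.sum_div]
      refine Finset.sum_congr rfl fun ℓ _ => ?_
      unfold P
      rw [div_mul_div_comm]
      congr 1
      · congr 1
        · rw [Finset.sum_boole]
        · rw [Finset.sum_boole]
    rw [h3]
    unfold P
    rw [show _ = ((univ.filter fun π : EdgeOrdering K => numComponents K π = k).card) from
        filter_univ_card_congr _ _ _ _ _,
      show _ = (Fintype.card (EdgeOrdering K)) from card_congr' _ _]
    rw [e1, h1, h2, hcard]
    push_cast
    rw [mul_div_mul_left _ _ hCne]

end ForestBuilding
end
end

section
/- Let $G$ be a finite simple graph with $m \geq 1$ edges, no isolated vertices, and no isolated edges (no connected component equal to a single edge). Then $p_G(x) = \frac{1}{m} \sum_{e \in E(G)} p_{G-e}(x)$, where for graphs with isolated vertices the polynomial is computed on the graph with isolated vertices removed (isolated vertices contribute factor 1). -/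
open Finset

noncomputable section
open scoped Classical

namespace ForestBuilding

variable {V : Type*} [Fintype V]

attribute [-instance] SimpleGraph.instDecidableRelAdjDeleteEdgesOfDecidablePredSym2MemSetOfDecidableEq

/-! ### Auxiliary lemmas -/

lemma edgeFinset_delete (G : SimpleGraph V) (e : Sym2 V) :
    (G.deleteEdges {e}).edgeFinset = G.edgeFinset.erase e := by
  ext f
  simp only [SimpleGraph.mem_edgeFinset, SimpleGraph.edgeSet_deleteEdges, Set.mem_diff,
    Set.mem_singleton_iff, Finset.mem_erase]
  tauto

lemma mem_delete_iff (G : SimpleGraph V) (e f : Sym2 V) :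
    f ∈ (G.deleteEdges {e}).edgeFinset ↔ f ∈ G.edgeFinset ∧ f ≠ e := by
  rw [edgeFinset_delete, Finset.mem_erase]; tauto

lemma card_delete (G : SimpleGraph V) {e : Sym2 V} (he : e ∈ G.edgeFinset) :
    (G.deleteEdges {e}).edgeFinset.card = G.edgeFinset.card - 1 := by
  rw [edgeFinset_delete, Finset.card_erase_of_mem he]

/-- Restriction of an edge ordering of `G` whose last edge is `e` to an edge
ordering of `G - e`. -/
def restrict (G : SimpleGraph V) (e : ↥G.edgeFinset) (π : EdgeOrdering G)
    (hπ : (π e : ℕ) = G.edgeFinset.card - 1) :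
    EdgeOrdering (G.deleteEdges {(e : Sym2 V)}) :=
  Equiv.ofBijective
    (fun f => ⟨(π ⟨f.1, ((mem_delete_iff G _ _).1 f.2).1⟩ : ℕ), by
      have h1 := (mem_delete_iff G (e : Sym2 V) f.1).1 f.2
      rw [card_delete G e.2]
      have hne : (⟨f.1, h1.1⟩ : ↥G.edgeFinset) ≠ e := by
        intro h; exact h1.2 (congrArg Subtype.val h)
      have h2 : π ⟨f.1, h1.1⟩ ≠ π e := fun h => hne (π.injective h)
      have h3 : (π ⟨f.1, h1.1⟩ : ℕ) ≠ G.edgeFinset.card - 1 := by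
        intro h; exact h2 (Fin.ext (h.trans hπ.symm))
      have h4 : (π ⟨f.1, h1.1⟩ : ℕ) < G.edgeFinset.card := (π _).2
      omega⟩) <| by
    rw [Fintype.bijective_iff_injective_and_card]
    refine ⟨fun a b hab => ?_, by rw [Fintype.card_fin]; exact Fintype.card_coe _⟩
    have h1 := congrArg Fin.val hab
    have h2 := π.injective (Fin.ext h1)
    have h3 : (a.1 : Sym2 V) = b.1 :=
      congrArg (Subtype.val : ↥G.edgeFinset → Sym2 V) h2
    exact Subtype.ext h3

lemma restrict_apply (G : SimpleGraph V) (e : ↥G.edgeFinset) (π : EdgeOrdering G)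
    (hπ : (π e : ℕ) = G.edgeFinset.card - 1)
    (f : ↥(G.deleteEdges {(e : Sym2 V)}).edgeFinset) :
    (restrict G e π hπ f : ℕ) = (π ⟨f.1, ((mem_delete_iff G _ _).1 f.2).1⟩ : ℕ) := rfl

/-- The underlying function of `extend`. -/
def extendFun (G : SimpleGraph V) (e : ↥G.edgeFinset) (hm : 1 ≤ G.edgeFinset.card)
    (σ : EdgeOrdering (G.deleteEdges {(e : Sym2 V)})) (f : ↥G.edgeFinset) :
    Fin G.edgeFinset.card :=
  if h : f = e then ⟨G.edgeFinset.card - 1, by omega⟩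
  else
    have hmem : f.1 ∈ (G.deleteEdges {(e : Sym2 V)}).edgeFinset :=
      (mem_delete_iff G _ _).2 ⟨f.2, fun hh => h (Subtype.ext hh)⟩
    ⟨(σ ⟨f.1, hmem⟩ : ℕ), by
      have h2 := (σ ⟨f.1, hmem⟩).2
      have hc := card_delete G e.2
      omega⟩

lemma extendFun_self (G : SimpleGraph V) (e : ↥G.edgeFinset) (hm : 1 ≤ G.edgeFinset.card)
    (σ : EdgeOrdering (G.deleteEdges {(e : Sym2 V)})) :
    (extendFun G e hm σ e : ℕ) = G.edgeFinset.card - 1 := by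
  unfold extendFun; rw [dif_pos rfl]

lemma extendFun_ne (G : SimpleGraph V) (e : ↥G.edgeFinset) (hm : 1 ≤ G.edgeFinset.card)
    (σ : EdgeOrdering (G.deleteEdges {(e : Sym2 V)})) (f : ↥G.edgeFinset) (h : f ≠ e)
    (hmem : f.1 ∈ (G.deleteEdges {(e : Sym2 V)}).edgeFinset) :
    (extendFun G e hm σ f : ℕ) = (σ ⟨f.1, hmem⟩ : ℕ) := by
  unfold extendFun; rw [dif_neg h]

/-- Extension of an edge ordering of `G - e` to an edge ordering of `G` that
puts `e` last. -/
def extend (G : SimpleGraph V) (e : ↥G.edgeFinset) (hm : 1 ≤ G.edgeFinset.card)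
    (σ : EdgeOrdering (G.deleteEdges {(e : Sym2 V)})) : EdgeOrdering G :=
  Equiv.ofBijective (extendFun G e hm σ) <| by
    rw [Fintype.bijective_iff_injective_and_card]
    refine ⟨fun a b hab => ?_, by rw [Fintype.card_fin]; exact Fintype.card_coe _⟩
    have hval := congrArg Fin.val hab
    by_cases ha : a = e <;> by_cases hb : b = e
    · exact ha.trans hb.symm
    · exfalso
      subst ha
      have hmem : b.1 ∈ (G.deleteEdges {(a : Sym2 V)}).edgeFinset :=
        (mem_delete_iff G _ _).2 ⟨b.2, fun hh => hb (Subtype.ext hh)⟩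
      rw [extendFun_self, extendFun_ne G a hm σ b hb hmem] at hval
      have h2 := (σ ⟨b.1, hmem⟩).2
      have hc := card_delete G a.2
      omega
    · exfalso
      subst hb
      have hmem : a.1 ∈ (G.deleteEdges {(b : Sym2 V)}).edgeFinset :=
        (mem_delete_iff G _ _).2 ⟨a.2, fun hh => ha (Subtype.ext hh)⟩
      rw [extendFun_self, extendFun_ne G b hm σ a ha hmem] at hval
      have h2 := (σ ⟨a.1, hmem⟩).2
      have hc := card_delete G b.2
      omega
    · have hma : a.1 ∈ (G.deleteEdges {(e : Sym2 V)}).edgeFinset :=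
        (mem_delete_iff G _ _).2 ⟨a.2, fun hh => ha (Subtype.ext hh)⟩
      have hmb : b.1 ∈ (G.deleteEdges {(e : Sym2 V)}).edgeFinset :=
        (mem_delete_iff G _ _).2 ⟨b.2, fun hh => hb (Subtype.ext hh)⟩
      rw [extendFun_ne G e hm σ a ha hma, extendFun_ne G e hm σ b hb hmb] at hval
      have h2 := σ.injective (Fin.ext hval)
      have h3 : (a.1 : Sym2 V) = b.1 :=
        congrArg (Subtype.val : ↥(G.deleteEdges {(e : Sym2 V)}).edgeFinset → Sym2 V) h2
      exact Subtype.ext h3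

lemma extend_apply_self (G : SimpleGraph V) (e : ↥G.edgeFinset) (hm : 1 ≤ G.edgeFinset.card)
    (σ : EdgeOrdering (G.deleteEdges {(e : Sym2 V)})) :
    ((extend G e hm σ) e : ℕ) = G.edgeFinset.card - 1 :=
  extendFun_self G e hm σ

lemma extend_apply_ne (G : SimpleGraph V) (e : ↥G.edgeFinset) (hm : 1 ≤ G.edgeFinset.card)
    (σ : EdgeOrdering (G.deleteEdges {(e : Sym2 V)})) (f : ↥G.edgeFinset) (h : f ≠ e)
    (hmem : f.1 ∈ (G.deleteEdges {(e : Sym2 V)}).edgeFinset) :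
    ((extend G e hm σ) f : ℕ) = (σ ⟨f.1, hmem⟩ : ℕ) :=
  extendFun_ne G e hm σ f h hmem

lemma extend_restrict (G : SimpleGraph V) (e : ↥G.edgeFinset) (hm : 1 ≤ G.edgeFinset.card)
    (π : EdgeOrdering G) (hπ : (π e : ℕ) = G.edgeFinset.card - 1) :
    extend G e hm (restrict G e π hπ) = π := by
  apply Equiv.ext; intro f
  apply Fin.ext
  by_cases h : f = e
  · subst h
    rw [extend_apply_self, hπ]
  · have hmem : f.1 ∈ (G.deleteEdges {(e : Sym2 V)}).edgeFinset :=
      (mem_delete_iff G _ _).2 ⟨f.2, fun hh => h (Subtype.ext hh)⟩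
    rw [extend_apply_ne G e hm _ f h hmem, restrict_apply]

lemma restrict_extend (G : SimpleGraph V) (e : ↥G.edgeFinset) (hm : 1 ≤ G.edgeFinset.card)
    (σ : EdgeOrdering (G.deleteEdges {(e : Sym2 V)}))
    (hπ : ((extend G e hm σ) e : ℕ) = G.edgeFinset.card - 1) :
    restrict G e (extend G e hm σ) hπ = σ := by
  apply Equiv.ext; intro f
  apply Fin.ext
  rw [restrict_apply]
  have h1 := (mem_delete_iff G (e : Sym2 V) f.1).1 f.2
  have hne : (⟨f.1, h1.1⟩ : ↥G.edgeFinset) ≠ e := fun h => h1.2 (congrArg Subtype.val h)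
  rw [extend_apply_ne G e hm σ _ hne f.2]


lemma exists_sharing' (G : SimpleGraph V)
    (hedge : ∀ u v : V, G.Adj u v → 2 ≤ G.degree u ∨ 2 ≤ G.degree v)
    {u v : V} (huv : G.Adj u v) :
    ∃ f ∈ G.edgeFinset, f ≠ s(u, v) ∧ SharesVertex s(u, v) f := by
  have hne := G.ne_of_adj huv
  rcases hedge u v huv with h | h
  · obtain ⟨w, hw, hwv⟩ := Finset.exists_mem_ne
      (s := G.neighborFinset u)
      (by rw [SimpleGraph.card_neighborFinset_eq_degree]; omega) v
    rw [SimpleGraph.mem_neighborFinset] at hw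
    refine ⟨s(u, w), ?_, ?_, ⟨u, ?_, ?_⟩⟩
    · rw [SimpleGraph.mem_edgeFinset]; exact hw
    · intro hh
      rw [Sym2.eq_iff] at hh
      rcases hh with ⟨-, h2⟩ | ⟨h1, -⟩
      · exact hwv h2
      · exact hne h1
    · simp
    · simp
  · obtain ⟨w, hw, hwu⟩ := Finset.exists_mem_ne
      (s := G.neighborFinset v)
      (by rw [SimpleGraph.card_neighborFinset_eq_degree]; omega) u
    rw [SimpleGraph.mem_neighborFinset] at hw
    refine ⟨s(v, w), ?_, ?_, ⟨v, ?_, ?_⟩⟩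
    · rw [SimpleGraph.mem_edgeFinset]; exact hw
    · intro hh
      rw [Sym2.eq_iff] at hh
      rcases hh with ⟨h1, -⟩ | ⟨-, h2⟩
      · exact hne h1.symm
      · exact hwu h2
    · simp
    · simp

lemma exists_sharing (G : SimpleGraph V)
    (hedge : ∀ u v : V, G.Adj u v → 2 ≤ G.degree u ∨ 2 ≤ G.degree v)
    (e : ↥G.edgeFinset) :
    ∃ f : ↥G.edgeFinset, f ≠ e ∧ SharesVertex (e : Sym2 V) (f : Sym2 V) := by
  have he : (e : Sym2 V) ∈ G.edgeSet := SimpleGraph.mem_edgeFinset.1 e.2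
  have key : ∀ ε : Sym2 V, ε ∈ G.edgeSet →
      ∃ f ∈ G.edgeFinset, f ≠ ε ∧ SharesVertex ε f := by
    intro ε
    induction ε using Sym2.ind with
    | _ u v => exact fun hadj => exists_sharing' G hedge ((SimpleGraph.mem_edgeSet G).1 hadj)
  obtain ⟨f, hf, hfe, hsh⟩ := key (e : Sym2 V) he
  exact ⟨⟨f, hf⟩, fun hh => hfe (congrArg Subtype.val hh), hsh⟩

lemma not_starter (G : SimpleGraph V)
    (hedge : ∀ u v : V, G.Adj u v → 2 ≤ G.degree u ∨ 2 ≤ G.degree v)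
    (e : ↥G.edgeFinset) (π : EdgeOrdering G)
    (hπ : (π e : ℕ) = G.edgeFinset.card - 1) :
    ¬ (∀ f : ↥G.edgeFinset, f ≠ e → SharesVertex (e : Sym2 V) (f : Sym2 V) → π e < π f) := by
  obtain ⟨f, hfe, hsh⟩ := exists_sharing G hedge e
  intro h
  have h1 : (π e : ℕ) < (π f : ℕ) := h f hfe hsh
  have h2 : (π f : ℕ) < G.edgeFinset.card := (π f).2
  have h3 : 1 ≤ G.edgeFinset.card := Nat.one_le_iff_ne_zero.2 fun hz => by
    have := (π e).2; omega
  omega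


lemma nc_restrict (G : SimpleGraph V)
    (hedge : ∀ u v : V, G.Adj u v → 2 ≤ G.degree u ∨ 2 ≤ G.degree v)
    (e : ↥G.edgeFinset) (π : EdgeOrdering G)
    (hπ : (π e : ℕ) = G.edgeFinset.card - 1) :
    numComponents (G.deleteEdges {(e : Sym2 V)}) (restrict G e π hπ) = numComponents G π := by
  unfold numComponents
  refine Finset.card_bij'
    (fun f _ => (⟨f.1, ((mem_delete_iff G _ _).1 f.2).1⟩ : ↥G.edgeFinset))
    (fun g hg => (⟨g.1, (mem_delete_iff G (e : Sym2 V) g.1).2 ⟨g.2, by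
      intro hh
      have hge : g = e := Subtype.ext hh
      exact not_starter G hedge e π hπ (hge ▸ (Finset.mem_filter.1 hg).2)⟩⟩ :
        ↥(G.deleteEdges {(e : Sym2 V)}).edgeFinset))
    ?_ ?_ ?_ ?_
  · intro f hf
    have hstart := (Finset.mem_filter.1 hf).2
    refine Finset.mem_filter.2 ⟨Finset.mem_univ _, ?_⟩
    intro g hg hsh
    have hfm := (mem_delete_iff G (e : Sym2 V) f.1).1 f.2
    by_cases hge : g = e
    · subst hge
      show (π ⟨f.1, hfm.1⟩ : ℕ) < (π g : ℕ)
      have hne : (⟨f.1, hfm.1⟩ : ↥G.edgeFinset) ≠ g := by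
        intro h; exact hfm.2 (congrArg Subtype.val h)
      have h2 : π ⟨f.1, hfm.1⟩ ≠ π g := fun h => hne (π.injective h)
      have h3 : (π ⟨f.1, hfm.1⟩ : ℕ) ≠ (π g : ℕ) := fun h => h2 (Fin.ext h)
      have h4 : (π ⟨f.1, hfm.1⟩ : ℕ) < G.edgeFinset.card := (π _).2
      omega
    · have hgm : g.1 ∈ (G.deleteEdges {(e : Sym2 V)}).edgeFinset :=
        (mem_delete_iff G _ _).2 ⟨g.2, fun hh => hge (Subtype.ext hh)⟩
      have hne : (⟨g.1, hgm⟩ : ↥(G.deleteEdges {(e : Sym2 V)}).edgeFinset) ≠ f := by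
        intro h
        apply hg
        have : g.1 = f.1 := congrArg Subtype.val h
        exact Subtype.ext this
      have := hstart ⟨g.1, hgm⟩ hne hsh
      rw [Fin.lt_def] at this ⊢
      rw [restrict_apply, restrict_apply] at this
      exact this
  · intro g hg
    have hstart := (Finset.mem_filter.1 hg).2
    refine Finset.mem_filter.2 ⟨Finset.mem_univ _, ?_⟩
    intro f' hf' hsh
    have hfm := (mem_delete_iff G (e : Sym2 V) f'.1).1 f'.2
    have hne : (⟨f'.1, hfm.1⟩ : ↥G.edgeFinset) ≠ g := by
      intro h
      apply hf'
      have : f'.1 = g.1 := congrArg Subtype.val h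
      exact Subtype.ext this
    have := hstart ⟨f'.1, hfm.1⟩ hne hsh
    rw [Fin.lt_def] at this ⊢
    rw [restrict_apply, restrict_apply]
    exact this
  · intro f hf
    exact Subtype.ext rfl
  · intro g hg
    exact Subtype.ext rfl

lemma fiber_sum (G : SimpleGraph V) (hm : 1 ≤ G.edgeFinset.card)
    (hedge : ∀ u v : V, G.Adj u v → 2 ≤ G.degree u ∨ 2 ≤ G.degree v)
    (e : ↥G.edgeFinset) (x : ℚ) :
    ∑ π ∈ Finset.univ.filter
        (fun π : EdgeOrdering G => π.symm ⟨G.edgeFinset.card - 1, by omega⟩ = e),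
      x ^ numComponents G π
    = ∑ σ : EdgeOrdering (G.deleteEdges {(e : Sym2 V)}),
        x ^ numComponents (G.deleteEdges {(e : Sym2 V)}) σ := by
  refine Finset.sum_bij'
    (fun π hπ => restrict G e π (by
      have h1 := (Finset.mem_filter.1 hπ).2
      have h2 : (⟨G.edgeFinset.card - 1, by omega⟩ : Fin G.edgeFinset.card) = π e :=
        (Equiv.symm_apply_eq π).1 h1
      exact (congrArg Fin.val h2).symm))
    (fun σ _ => extend G e hm σ)
    (fun π hπ => Finset.mem_univ _)
    ?_ ?_ ?_ ?_
  · intro σ _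
    refine Finset.mem_filter.2 ⟨Finset.mem_univ _, ?_⟩
    rw [Equiv.symm_apply_eq]
    exact (Fin.ext (extend_apply_self G e hm σ).symm)
  · intro π hπ
    exact extend_restrict G e hm π _
  · intro σ _
    exact restrict_extend G e hm σ _
  · intro π hπ
    exact congrArg (x ^ ·) (nc_restrict G hedge e π _).symm
/-- **Recurrence** (Theorem 5 of the paper):  if `G` has `m ≥ 1` edges, no
isolated vertices and no isolated edges (no component consisting of a single
edge, i.e. every edge has an endpoint of degree at least two), then
`p_G(x) = (1/m) ∑_{e ∈ E(G)} p_{G-e}(x)`, where isolated vertices created by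
deleting an edge contribute a factor `1` (the convention `p_{K₁}(x) = 1`). -/
theorem pPoly_recurrence (G : SimpleGraph V)
    (hm : 1 ≤ G.edgeFinset.card)
    (hiso : ∀ v : V, 0 < G.degree v)
    (hedge : ∀ u v : V, G.Adj u v → 2 ≤ G.degree u ∨ 2 ≤ G.degree v) :
    ∀ x : ℚ, pPoly G x =
      (1 / (G.edgeFinset.card : ℚ)) * ∑ e ∈ G.edgeFinset, pPoly (G.deleteEdges {e}) x := by
  intro x
  have hcard : Fintype.card (EdgeOrdering G) = Nat.factorial G.edgeFinset.card := by
    rw [Fintype.card_equiv (Fintype.equivFinOfCardEq (Fintype.card_coe _)), Fintype.card_coe]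
  have hcard' : ∀ e : ↥G.edgeFinset,
      Fintype.card (EdgeOrdering (G.deleteEdges {(e : Sym2 V)}))
        = Nat.factorial (G.edgeFinset.card - 1) := by
    intro e
    rw [Fintype.card_equiv (Fintype.equivFinOfCardEq (Fintype.card_coe _)), Fintype.card_coe,
      card_delete G e.2]
  have key : ∑ π : EdgeOrdering G, x ^ numComponents G π
      = ∑ e : ↥G.edgeFinset, ∑ σ : EdgeOrdering (G.deleteEdges {(e : Sym2 V)}),
          x ^ numComponents (G.deleteEdges {(e : Sym2 V)}) σ := by
    rw [← Finset.sum_fiberwise_of_maps_to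
      (g := fun π : EdgeOrdering G => π.symm ⟨G.edgeFinset.card - 1, by omega⟩)
      (t := Finset.univ) (fun π _ => Finset.mem_univ _)
      (fun π => x ^ numComponents G π)]
    exact Finset.sum_congr rfl fun e _ => fiber_sum G hm hedge e x
  rw [pPoly, key, ← Finset.sum_coe_sort G.edgeFinset (fun e => pPoly (G.deleteEdges {e}) x),
    Finset.sum_div, Finset.mul_sum]
  refine Finset.sum_congr rfl fun e _ => ?_
  rw [pPoly, hcard' e, hcard]
  have hfac : (Nat.factorial G.edgeFinset.card : ℚ)
      = (G.edgeFinset.card : ℚ) * (Nat.factorial (G.edgeFinset.card - 1) : ℚ) := by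
    exact_mod_cast (Nat.mul_factorial_pred (by omega)).symm
  rw [hfac]
  have h1 : (G.edgeFinset.card : ℚ) ≠ 0 := Nat.cast_ne_zero.2 (by omega)
  have h2 : (Nat.factorial (G.edgeFinset.card - 1) : ℚ) ≠ 0 := Nat.cast_ne_zero.2 (Nat.factorial_ne_zero _)
  field_simp

end ForestBuilding
end
end
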